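/- arXiv:2406.04060 — 3 statements merged into one kernel-verified Lean document; each statement's English description precedes it below -/
import Mathlib

section
/- Let G_n = P_n □ C_4 be the block tower graph, the Cartesian product of the path P_n = a_1...a_n with the 4-cycle C_4 = b_1b_2b_3b_4b_1. Then lim_{n→∞} (R_{G_{n+1}}[(a_1,b_1),(a_{n+1},b_3)] − R_{G_n}[(a_1,b_1),(a_n,b_3)]) = 1/4. -/
open Matrix Finset

open Classical in
/-- The Moore–Penrose pseudoinverse of a real square matrix, defined via the
four Penrose conditions (it is unique when it exists). -/
noncomputable def Matrix.mpinv {m : Type*} [Fintype m] [DecidableEq m]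
    (A : Matrix m m ℝ) : Matrix m m ℝ :=
  if h : ∃ B : Matrix m m ℝ,
      A * B * A = A ∧ B * A * B = B ∧ (A * B)ᵀ = A * B ∧ (B * A)ᵀ = B * A
  then h.choose else 0

/-- Effective resistance between `u` and `v` with respect to a (weighted)
Laplacian matrix `L`:  `(e_u - e_v)ᵀ L⁺ (e_u - e_v)`. -/
noncomputable def effRes {m : Type*} [Fintype m] [DecidableEq m]
    (L : Matrix m m ℝ) (u v : m) : ℝ :=
  (Pi.single u 1 - Pi.single v 1) ⬝ᵥ (L.mpinv *ᵥ (Pi.single u 1 - Pi.single v 1))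

/-- The (real) Laplacian matrix of a simple graph. -/
noncomputable def lapm {V : Type*} [Fintype V] [DecidableEq V]
    (G : SimpleGraph V) : Matrix V V ℝ :=
  letI := Classical.decRel G.Adj
  G.lapMatrix ℝ

/-- Resistance distance between two vertices of a simple graph. -/
noncomputable def resDist {V : Type*} [Fintype V] [DecidableEq V]
    (G : SimpleGraph V) (u v : V) : ℝ :=
  effRes (lapm G) u v

/-- Resistance diameter of a simple graph. -/
noncomputable def resDiam {V : Type*} [Fintype V] [DecidableEq V]
    (G : SimpleGraph V) : ℝ :=
  ⨆ p : V × V, resDist G p.1 p.2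

/-- The weighted Laplacian of the cone over `G` with apex `Sum.inr ()`:
edges of `G` have conductance `1` (unit resistance), and each vertex of `G`
is joined to the apex by an edge of conductance `m` (resistance `1/m`). -/
noncomputable def coneLap {V : Type*} [Fintype V] [DecidableEq V]
    (G : SimpleGraph V) (m : ℝ) : Matrix (V ⊕ Unit) (V ⊕ Unit) ℝ :=
  letI := Classical.decRel G.Adj
  let W : Matrix (V ⊕ Unit) (V ⊕ Unit) ℝ := fun i j =>
    match i, j with
    | Sum.inl a, Sum.inl b => if G.Adj a b then 1 else 0
    | Sum.inl _, Sum.inr _ => m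
    | Sum.inr _, Sum.inl _ => m
    | Sum.inr _, Sum.inr _ => 0
  Matrix.of fun i j => (if i = j then ∑ k, W i k else 0) - W i j

/-- The `k`-dimensional hypercube graph `Q_k`. -/
def hypercube (k : ℕ) : SimpleGraph (Fin k → Bool) where
  Adj x y := (Finset.univ.filter fun i => x i ≠ y i).card = 1
  symm := by
    constructor
    intro x y h
    rw [← h]
    congr 1
    ext i
    simp [ne_comm]
  loopless := by constructor; intro x; simp

/-- The join `G + H` of two graphs on disjoint vertex sets. -/
def graphJoin {V W : Type*} (G : SimpleGraph V) (H : SimpleGraph W) :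
    SimpleGraph (V ⊕ W) where
  Adj x y :=
    match x, y with
    | Sum.inl a, Sum.inl b => G.Adj a b
    | Sum.inr a, Sum.inr b => H.Adj a b
    | Sum.inl _, Sum.inr _ => True
    | Sum.inr _, Sum.inl _ => True
  symm := by
    constructor
    rintro (a | a) (b | b) h
    · exact G.adj_symm h
    · trivial
    · trivial
    · exact H.adj_symm h
  loopless := by
    constructor
    rintro (a | a) h
    · exact G.irrefl h
    · exact H.irrefl h

noncomputable def rr : ℝ := 2 + Real.sqrt 3
noncomputable def ssc : ℝ := 3 + 2 * Real.sqrt 2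

lemma hr2 : rr^2 = 4*rr - 1 := by
  have h : Real.sqrt 3 ^ 2 = 3 := Real.sq_sqrt (by norm_num)
  rw [rr]; nlinarith [h]

lemma hs2 : ssc^2 = 6*ssc - 1 := by
  have h : Real.sqrt 2 ^ 2 = 2 := Real.sq_sqrt (by norm_num)
  rw [ssc]; nlinarith [h]

lemma hr_gt : 1 < rr := by
  have := Real.sqrt_nonneg 3
  rw [rr]; linarith

lemma hs_gt : 1 < ssc := by
  have := Real.sqrt_nonneg 2
  rw [ssc]; linarith

lemma Cden_pos (j : ℕ) : 0 < (3-rr) + rr^j*(3*rr-1) := by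
  have h1 : (1:ℝ) ≤ rr^j := one_le_pow₀ hr_gt.le
  have h2 : (0:ℝ) ≤ 3*rr - 1 := by nlinarith [hr_gt]
  nlinarith [mul_le_mul_of_nonneg_right h1 h2]

lemma Dden_neg (j : ℕ) : (5-ssc) - ssc^j*(5*ssc-1) < 0 := by
  have h1 : (1:ℝ) ≤ ssc^j := one_le_pow₀ hs_gt.le
  have h2 : (0:ℝ) ≤ 5*ssc - 1 := by nlinarith [hs_gt]
  nlinarith [mul_le_mul_of_nonneg_right h1 h2, hs_gt]

noncomputable def Cc (j : ℕ) : ℝ := (2*((3-rr) + rr^j*(3*rr-1)))⁻¹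
noncomputable def Dd (j : ℕ) : ℝ := (4*((5-ssc) - ssc^j*(5*ssc-1)))⁻¹

lemma hCc (j : ℕ) : Cc j * (2*((3-rr) + rr^j*(3*rr-1))) = 1 := by
  rw [Cc]
  exact inv_mul_cancel₀ (by have := Cden_pos j; positivity)

lemma hDd (j : ℕ) : Dd j * (4*((5-ssc) - ssc^j*(5*ssc-1))) = 1 := by
  rw [Dd]
  refine inv_mul_cancel₀ (ne_of_lt ?_)
  have := Dden_neg j
  linarith

def cf : Fin 4 → ℝ := fun b => if b = 0 then 1 else if b = 2 then -1 else 0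
def tf : Fin 4 → ℝ := fun b => if b = 0 ∨ b = 2 then 1 else -1

noncomputable def alf (j : ℕ) (a : Fin (j+2)) : ℝ := -(a:ℝ)/4
noncomputable def bet (j : ℕ) (a : Fin (j+2)) : ℝ := Cc j * (rr^(a:ℕ) + rr^(j+1-(a:ℕ)))
noncomputable def gam (j : ℕ) (a : Fin (j+2)) : ℝ := Dd j * (ssc^(a:ℕ) - ssc^(j+1-(a:ℕ)))
noncomputable def yv (j : ℕ) (p : Fin (j+2) × Fin 4) : ℝ :=
  alf j p.1 + bet j p.1 * cf p.2 + gam j p.1 * tf p.2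

open Classical in
lemma lapm_apply {V : Type*} [Fintype V] [DecidableEq V] (G : SimpleGraph V) (i j : V) :
    lapm G i j = (if i = j then (G.degree i : ℝ) else 0) - (if G.Adj i j then 1 else 0) := by
  letI := Classical.decRel G.Adj
  simp only [lapm, SimpleGraph.lapMatrix, SimpleGraph.degMatrix, Matrix.diagonal,
    Matrix.sub_apply, SimpleGraph.adjMatrix_apply, Matrix.of_apply]

open Classical in
lemma lapm_boxProd_apply {V W : Type*} [Fintype V] [Fintype W] [DecidableEq V] [DecidableEq W]
    (G : SimpleGraph V) (H : SimpleGraph W) (p q : V × W) :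
    lapm (G.boxProd H) p q =
      lapm G p.1 q.1 * (if p.2 = q.2 then 1 else 0) +
      (if p.1 = q.1 then 1 else 0) * lapm H p.2 q.2 := by
  obtain ⟨a, b⟩ := p
  obtain ⟨c, d⟩ := q
  simp only [lapm_apply]
  by_cases h1 : a = c <;> by_cases h2 : b = d
  · subst h1; subst h2
    simp [SimpleGraph.degree_boxProd]
  · subst h1
    have hne : ((a, b) : V × W) ≠ (a, d) := by simp [h2]
    simp [hne, h2, SimpleGraph.boxProd_adj_right]
  · subst h2
    have hne : ((a, b) : V × W) ≠ (c, b) := by simp [h1]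
    simp [hne, h1, SimpleGraph.boxProd_adj_left]
  · have hne : ((a, b) : V × W) ≠ (c, d) := by simp [h1]
    have hadj : ¬ (G.boxProd H).Adj (a,b) (c,d) := by
      rw [SimpleGraph.boxProd_adj]
      push_neg
      exact ⟨fun _ => h2, fun _ => h1⟩
    simp [hne, h1, h2, hadj]

open Classical in
lemma lapm_boxProd_mulVec {V W : Type*} [Fintype V] [Fintype W] [DecidableEq V] [DecidableEq W]
    (G : SimpleGraph V) (H : SimpleGraph W) (f : V × W → ℝ) (i : V) (b : W) :
    (lapm (G.boxProd H) *ᵥ f) (i, b) =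
      (lapm G *ᵥ (fun a => f (a, b))) i + (lapm H *ᵥ (fun c => f (i, c))) b := by
  rw [Matrix.mulVec, dotProduct]
  rw [Fintype.sum_prod_type]
  have key : ∀ a : V, ∑ c : W, lapm (G.boxProd H) (i, b) (a, c) * f (a, c)
      = lapm G i a * f (a, b) + (if i = a then 1 else 0) * ∑ c, lapm H b c * f (i, c) := by
    intro a
    rw [Finset.mul_sum]
    simp only [lapm_boxProd_apply, add_mul, Finset.sum_add_distrib]
    congr 1
    · simp [mul_ite, ite_mul, mul_assoc]
    · by_cases h : i = a
      · subst h; simp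
      · simp [h]
  rw [Finset.sum_congr rfl (fun a _ => key a), Finset.sum_add_distrib]
  have h2 : ∑ x : V, (if i = x then (1:ℝ) else 0) * (∑ c, lapm H b c * f (i, c))
      = ∑ c, lapm H b c * f (i, c) := by simp
  rw [h2, Matrix.mulVec, dotProduct, Matrix.mulVec, dotProduct]

open Classical in
lemma path_adj_sum (m : ℕ) (p : Fin (m+2) → ℝ) (i : Fin (m+2)) :
    ∑ a, (if (SimpleGraph.pathGraph (m+2)).Adj i a then p a else 0) =
      (if _h : (i:ℕ) = 0 then 0 else p ⟨(i:ℕ) - 1, by omega⟩)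
      + (if _h : (i:ℕ) = m+1 then 0 else p ⟨(i:ℕ) + 1, by have := i.isLt; omega⟩) := by
  have point : ∀ a : Fin (m+2), (if (SimpleGraph.pathGraph (m+2)).Adj i a then p a else 0) =
      (if _h : (i:ℕ) = 0 then 0 else if a = ⟨(i:ℕ) - 1, by omega⟩ then p a else 0)
      + (if _h : (i:ℕ) = m+1 then 0
         else if a = ⟨(i:ℕ) + 1, by have := i.isLt; omega⟩ then p a else 0) := by
    intro a
    have hi := i.isLt
    have ha := a.isLt
    simp only [SimpleGraph.pathGraph_adj, Fin.ext_iff]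
    split_ifs <;> simp_all [-Fin.val_eq_zero_iff] <;> omega
  rw [Finset.sum_congr rfl (fun a _ => point a), Finset.sum_add_distrib]
  congr 1
  · by_cases h0 : (i:ℕ) = 0
    · simp [h0]
    · simp [h0]
  · by_cases hm : (i:ℕ) = m+1
    · simp [hm]
    · simp [hm]

open Classical in
lemma path_lap (m : ℕ) (p : Fin (m+2) → ℝ) (i : Fin (m+2)) :
    (lapm (SimpleGraph.pathGraph (m+2)) *ᵥ p) i =
      (if _h : (i:ℕ) = 0 then 0 else p i - p ⟨(i:ℕ) - 1, by omega⟩)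
      + (if _h : (i:ℕ) = m+1 then 0 else p i - p ⟨(i:ℕ) + 1, by have := i.isLt; omega⟩) := by
  letI := Classical.decRel (SimpleGraph.pathGraph (m+2)).Adj
  rw [Matrix.mulVec, dotProduct]
  have expand : ∀ a, lapm (SimpleGraph.pathGraph (m+2)) i a * p a =
      (if i = a then ((SimpleGraph.pathGraph (m+2)).degree i : ℝ) * p a else 0)
      - (if (SimpleGraph.pathGraph (m+2)).Adj i a then p a else 0) := by
    intro a
    rw [lapm_apply]
    by_cases h : i = a <;> by_cases h2 : (SimpleGraph.pathGraph (m+2)).Adj i a <;>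
      simp [h, h2] <;> ring
  rw [Finset.sum_congr rfl (fun a _ => expand a), Finset.sum_sub_distrib,
    Finset.sum_ite_eq univ i (fun a => ((SimpleGraph.pathGraph (m+2)).degree i : ℝ) * p a)]
  rw [path_adj_sum]
  have hdeg : ((SimpleGraph.pathGraph (m+2)).degree i : ℝ) =
      (if _h : (i:ℕ) = 0 then 0 else 1) + (if _h : (i:ℕ) = m+1 then 0 else 1) := by
    rw [SimpleGraph.degree_eq_sum_if_adj]
    have h1 := path_adj_sum m (fun _ => (1:ℝ)) i
    simpa using h1
  rw [if_pos (Finset.mem_univ i), hdeg]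
  by_cases h0 : (i:ℕ) = 0 <;> by_cases hm : (i:ℕ) = m+1 <;> simp [h0, hm] <;> ring

lemma c4_lap (q : Fin 4 → ℝ) (b : Fin 4) :
    (lapm (SimpleGraph.cycleGraph 4) *ᵥ q) b = 2 * q b - q (b - 1) - q (b + 1) := by
  rw [Matrix.mulVec, dotProduct, Fin.sum_univ_four]
  simp only [lapm_apply]
  fin_cases b <;>
    simp (config := { decide := true }) [SimpleGraph.cycleGraph_adj,
      SimpleGraph.degree_eq_sum_if_adj, Fin.sum_univ_four]
  · rw [show #(filter (fun x : Fin 4 => -x = 1 ∨ x = 1) univ) = 2 from by decide,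
      show ((-1 : Fin 4)) = 3 from by decide]
    push_cast; ring
  · rw [show #(filter (fun x : Fin 4 => x = 0 ∨ x - 1 = 1) univ) = 2 from by decide]
    push_cast; ring
  · rw [show #(filter (fun x : Fin 4 => 2 - x = 1 ∨ x - 2 = 1) univ) = 2 from by decide]
    push_cast; ring
  · rw [show #(filter (fun x : Fin 4 => 3 - x = 1 ∨ x - 3 = 1) univ) = 2 from by decide]
    push_cast; ring

lemma mpinv_penrose {m : Type*} [Fintype m] [DecidableEq m] (A : Matrix m m ℝ)
    (h : ∃ B : Matrix m m ℝ,
      A * B * A = A ∧ B * A * B = B ∧ (A * B)ᵀ = A * B ∧ (B * A)ᵀ = B * A) :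
    A * A.mpinv * A = A ∧ A.mpinv * A * A.mpinv = A.mpinv ∧
      (A * A.mpinv)ᵀ = A * A.mpinv ∧ (A.mpinv * A)ᵀ = A.mpinv * A := by
  rw [Matrix.mpinv, dif_pos h]
  exact h.choose_spec

lemma effRes_eq_of_sol {m : Type*} [Fintype m] [DecidableEq m] (L : Matrix m m ℝ)
    (hsym : Lᵀ = L)
    (hex : ∃ B : Matrix m m ℝ,
      L * B * L = L ∧ B * L * B = B ∧ (L * B)ᵀ = L * B ∧ (B * L)ᵀ = B * L)
    (u v : m) (y : m → ℝ)
    (hy : L *ᵥ y = Pi.single u 1 - Pi.single v 1) :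
    effRes L u v = (Pi.single u 1 - Pi.single v 1) ⬝ᵥ y := by
  obtain ⟨h1, h2, h3, h4⟩ := mpinv_penrose L hex
  set B := L.mpinv with hB
  set x : m → ℝ := Pi.single u 1 - Pi.single v 1 with hx
  have key : B * L * L = L := by
    have : (B * L * L)ᵀ = L := by
      rw [Matrix.transpose_mul, Matrix.transpose_mul]
      calc Lᵀ * (Lᵀ * Bᵀ) = Lᵀ * (B * L)ᵀ := by rw [Matrix.transpose_mul]
        _ = L * (B * L) := by rw [h4, hsym]
        _ = L := by rw [← Matrix.mul_assoc]; exact h1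
    calc B * L * L = ((B * L * L)ᵀ)ᵀ := by rw [Matrix.transpose_transpose]
      _ = Lᵀ := by rw [this]
      _ = L := hsym
  have step : B *ᵥ x = (B * L) *ᵥ y := by rw [← hy, Matrix.mulVec_mulVec]
  have fin : (B * L) *ᵥ (Pi.single u 1 - Pi.single v 1) = L *ᵥ y := by
    rw [show (Pi.single u 1 - Pi.single v 1 : m → ℝ) = L *ᵥ y from hy.symm, Matrix.mulVec_mulVec, key]
  rw [effRes, step, dotProduct_mulVec, ← Matrix.mulVec_transpose, h4, fin, hy]

lemma lapm_symm {V : Type*} [Fintype V] [DecidableEq V] (G : SimpleGraph V) :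
    (lapm G)ᵀ = lapm G := by
  letI := Classical.decRel G.Adj
  exact G.isSymm_lapMatrix ℝ

lemma lapm_penrose_exists {V : Type*} [Fintype V] [DecidableEq V] (G : SimpleGraph V)
    (hG : G.Connected) :
    ∃ B : Matrix V V ℝ, lapm G * B * lapm G = lapm G ∧ B * lapm G * B = B ∧
      (lapm G * B)ᵀ = lapm G * B ∧ (B * lapm G)ᵀ = B * lapm G := by
  classical
  letI := Classical.decRel G.Adj
  have hne : Nonempty V := hG.nonempty
  set L : Matrix V V ℝ := lapm G with hLdef
  have hsym : Lᵀ = L := lapm_symm G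
  have hNpos : (0 : ℝ) < (Fintype.card V : ℝ) := by
    exact_mod_cast Fintype.card_pos
  set J : Matrix V V ℝ := Matrix.of (fun _ _ => ((Fintype.card V : ℝ))⁻¹) with hJdef
  have hJsym : Jᵀ = J := rfl
  have hrow : ∀ i, ∑ k, L i k = 0 := by
    intro i
    have h0 := congrFun (G.lapMatrix_mulVec_const_eq_zero (R := ℝ)) i
    simpa [Matrix.mulVec, dotProduct, lapm, hLdef] using h0
  have hcol : ∀ j, ∑ k, L k j = 0 := by
    intro j
    have : ∀ k, L k j = L j k := fun k => by
      have := congrFun (congrFun hsym j) k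
      simpa [Matrix.transpose_apply] using this
    simp_rw [this]
    exact hrow j
  have hLJ : L * J = 0 := by
    ext i j
    simp only [Matrix.mul_apply, hJdef, Matrix.of_apply, Matrix.zero_apply]
    rw [← Finset.sum_mul, hrow, zero_mul]
  have hJL : J * L = 0 := by
    ext i j
    simp only [Matrix.mul_apply, hJdef, Matrix.of_apply, Matrix.zero_apply]
    rw [← Finset.mul_sum, hcol, mul_zero]
  have hJJ : J * J = J := by
    ext i j
    simp only [Matrix.mul_apply, hJdef, Matrix.of_apply, Finset.sum_const, card_univ,
      nsmul_eq_mul]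
    field_simp
  set M : Matrix V V ℝ := L + J with hMdef
  have hMJ : M * J = J := by rw [hMdef, Matrix.add_mul, hLJ, hJJ, zero_add]
  have hJM : J * M = J := by rw [hMdef, Matrix.mul_add, hJL, hJJ, zero_add]
  -- M is invertible
  have hker : ∀ x : V → ℝ, M *ᵥ x = 0 → x = 0 := by
    intro x hx
    have hdot : x ⬝ᵥ (L *ᵥ x) + x ⬝ᵥ (J *ᵥ x) = 0 := by
      have := congrArg (fun v => x ⬝ᵥ v) hx
      simpa [hMdef, Matrix.add_mulVec, dotProduct_add] using this
    have hJx : x ⬝ᵥ (J *ᵥ x) = (∑ i, x i)^2 / (Fintype.card V : ℝ) := by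
      have h1 : (J *ᵥ x) = fun _ => (∑ k, x k) * ((Fintype.card V : ℝ))⁻¹ := by
        funext i
        simp only [Matrix.mulVec, dotProduct, hJdef, Matrix.of_apply]
        rw [← Finset.mul_sum, mul_comm]
      rw [h1, dotProduct, ← Finset.sum_mul, div_eq_mul_inv]
      ring
    have hL0 : 0 ≤ x ⬝ᵥ (L *ᵥ x) := by
      have := (SimpleGraph.posSemidef_lapMatrix (R := ℝ) G).dotProduct_mulVec_nonneg x
      simpa [lapm, hLdef] using this
    have hJ0 : 0 ≤ x ⬝ᵥ (J *ᵥ x) := by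
      rw [hJx]; positivity
    have hLz : x ⬝ᵥ (L *ᵥ x) = 0 := by linarith
    have hJz : x ⬝ᵥ (J *ᵥ x) = 0 := by linarith
    have hsum : ∑ i, x i = 0 := by
      rw [hJx] at hJz
      have := (div_eq_zero_iff.mp hJz).resolve_right (by positivity)
      exact pow_eq_zero_iff (by norm_num) |>.mp this
    have hconst : ∀ i j, x i = x j := by
      have hq : Matrix.toLinearMap₂' ℝ (G.lapMatrix ℝ) x x = 0 := by
        rw [Matrix.toLinearMap₂'_apply']
        simpa [lapm, hLdef] using hLz
      have := (G.lapMatrix_toLinearMap₂'_apply'_eq_zero_iff_forall_reachable x).mp hq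
      exact fun i j => this i j (hG.preconnected i j)
    funext i
    have : (Fintype.card V : ℝ) * x i = ∑ j, x j := by
      rw [Finset.sum_congr rfl (fun j _ => (hconst j i))]
      simp [Finset.sum_const, card_univ, mul_comm]
    have : (Fintype.card V : ℝ) * x i = 0 := by rw [this, hsum]
    have := mul_eq_zero.mp this
    simpa [hNpos.ne'] using this
  have hinj : Function.Injective (M.mulVec) := by
    intro a b hab
    have : M *ᵥ (a - b) = 0 := by
      rw [Matrix.mulVec_sub, hab, sub_self]
    have := hker _ this
    exact sub_eq_zero.mp this
  have hunit : IsUnit M := (Matrix.mulVec_injective_iff_isUnit).mp hinj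
  have hdet : IsUnit M.det := (Matrix.isUnit_iff_isUnit_det M).mp hunit
  have hMMi : M * M⁻¹ = 1 := Matrix.mul_nonsing_inv M hdet
  have hMiM : M⁻¹ * M = 1 := Matrix.nonsing_inv_mul M hdet
  have hMiJ : M⁻¹ * J = J := by
    calc M⁻¹ * J = M⁻¹ * (M * J) := by rw [hMJ]
      _ = (M⁻¹ * M) * J := by rw [Matrix.mul_assoc]
      _ = J := by rw [hMiM, Matrix.one_mul]
  have hJMi : J * M⁻¹ = J := by
    calc J * M⁻¹ = (J * M) * M⁻¹ := by rw [hJM]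
      _ = J * (M * M⁻¹) := by rw [Matrix.mul_assoc]
      _ = J := by rw [hMMi, Matrix.mul_one]
  refine ⟨M⁻¹ - J, ?_, ?_, ?_, ?_⟩
  all_goals {
    have hLB : L * (M⁻¹ - J) = 1 - J := by
      rw [Matrix.mul_sub, hLJ, sub_zero,
        show L = M - J by rw [hMdef, add_sub_cancel_right], Matrix.sub_mul, hMMi, hJMi]
    have hBL : (M⁻¹ - J) * L = 1 - J := by
      rw [Matrix.sub_mul, hJL, sub_zero,
        show L = M - J by rw [hMdef, add_sub_cancel_right], Matrix.mul_sub, hMiM, hMiJ]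
    first
    | (rw [hLB, Matrix.sub_mul, Matrix.one_mul, hJL, sub_zero])
    | (rw [hBL, Matrix.sub_mul, Matrix.one_mul, Matrix.mul_sub, hJMi, hJJ, sub_self, sub_zero])
    | (rw [hLB, Matrix.transpose_sub, Matrix.transpose_one, hJsym])
    | (rw [hBL, Matrix.transpose_sub, Matrix.transpose_one, hJsym])
  }

open Classical in
lemma yv_solves (j : ℕ) :
    lapm ((SimpleGraph.pathGraph (j+2)).boxProd (SimpleGraph.cycleGraph 4)) *ᵥ yv j =
      Pi.single ((⟨0, (by omega : 0 < j + 1 + 1)⟩ : Fin (j+2)), (0 : Fin 4)) 1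
        - Pi.single (Fin.last (j+1), (2 : Fin 4)) 1 := by
  funext p
  obtain ⟨i, b⟩ := p
  have hiv := i.isLt
  rw [lapm_boxProd_mulVec, path_lap j (fun a => yv j (a, b)) i,
    c4_lap (fun c => yv j (i, c)) b]
  rw [Pi.sub_apply, Pi.single_apply, Pi.single_apply]
  have hC := hCc j
  have hD := hDd j
  have e40 : ((0:Fin 4) - 1) = 3 := by decide
  have e41 : ((0:Fin 4) + 1) = 1 := by decide
  have e42 : ((1:Fin 4) - 1) = 0 := by decide
  have e43 : ((1:Fin 4) + 1) = 2 := by decide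
  have e44 : ((2:Fin 4) - 1) = 1 := by decide
  have e45 : ((2:Fin 4) + 1) = 3 := by decide
  have e46 : ((3:Fin 4) - 1) = 2 := by decide
  have e47 : ((3:Fin 4) + 1) = 0 := by decide
  by_cases h0 : (i:ℕ) = 0
  · rw [dif_pos h0, dif_neg (by omega)]
    have hne1 : ((i, b) = (Fin.last (j+1), (2:Fin 4))) = False := by
      simp only [Prod.mk.injEq, Fin.ext_iff, Fin.val_last, h0, eq_self_iff_true]
      simp only [eq_iff_iff, iff_false, not_and]
      intro h; omega
    have heq1 : ((i, b) = ((⟨0, by omega⟩ : Fin (j+2)), (0:Fin 4))) = (b = 0) := by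
      simp only [Prod.mk.injEq, Fin.ext_iff, h0, eq_iff_iff]
      simp
    simp only [hne1, heq1, if_false]
    have hsub0 : j + 1 - ((i:ℕ)+1) = j := by omega
    fin_cases b <;>
      simp (config := { decide := true }) [e40, e41, e42, e43, e44, e45, e46, e47,
        yv, alf, bet, gam, cf, tf, h0, hsub0] <;>
      push_cast <;>
      [linear_combination (1/2) * hC + (1/4) * hD;
       linear_combination (-(1/4)) * hD;
       linear_combination (-(1/2)) * hC + (1/4) * hD;
       linear_combination (-(1/4)) * hD]
  · by_cases hm : (i:ℕ) = j+1
    · rw [dif_neg h0, dif_pos hm]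
      have hne1 : ((i, b) = ((⟨0, by omega⟩ : Fin (j+2)), (0:Fin 4))) = False := by
        simp only [Prod.mk.injEq, Fin.ext_iff, eq_iff_iff, iff_false, not_and]
        intro h; omega
      have heq1 : ((i, b) = (Fin.last (j+1), (2:Fin 4))) = (b = 2) := by
        simp only [Prod.mk.injEq, Fin.ext_iff, Fin.val_last, hm, eq_iff_iff]
        simp
      simp only [hne1, heq1, if_false]
      have hsub1 : (i:ℕ) - 1 = j := by omega
      have hsub2 : j + 1 - (i:ℕ) = 0 := by omega
      have hsub3 : j + 1 - j = 1 := by omega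
      fin_cases b <;>
        simp (config := { decide := true }) [e40, e41, e42, e43, e44, e45, e46, e47,
          yv, alf, bet, gam, cf, tf, hm, hsub1, hsub2, hsub3] <;>
        push_cast <;>
        [linear_combination (1/2) * hC + (-(1/4)) * hD;
         linear_combination (1/4) * hD;
         linear_combination (-(1/2)) * hC + (-(1/4)) * hD;
         linear_combination (1/4) * hD]
    · rw [dif_neg h0, dif_neg hm]
      have hne1 : ((i, b) = ((⟨0, by omega⟩ : Fin (j+2)), (0:Fin 4))) = False := by
        simp only [Prod.mk.injEq, Fin.ext_iff, eq_iff_iff, iff_false, not_and]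
        intro h; omega
      have hne2 : ((i, b) = (Fin.last (j+1), (2:Fin 4))) = False := by
        simp only [Prod.mk.injEq, Fin.ext_iff, Fin.val_last, eq_iff_iff, iff_false, not_and]
        intro h; omega
      simp only [hne1, hne2, if_false, sub_zero]
      obtain ⟨u, hu⟩ : ∃ u, (i:ℕ) = u + 1 := ⟨(i:ℕ) - 1, by omega⟩
      obtain ⟨w, hw⟩ : ∃ w, j - (i:ℕ) = w := ⟨j - (i:ℕ), rfl⟩
      have E2 : (i:ℕ) - 1 = u := by omega
      have E3 : (i:ℕ) + 1 = u + 2 := by omega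
      have E4 : j + 1 - (i:ℕ) = w + 1 := by omega
      have E5 : j + 1 - ((i:ℕ) - 1) = w + 2 := by omega
      have E6 : j + 1 - ((i:ℕ) + 1) = w := by omega
      have E5' : j + 1 - u = w + 2 := by omega
      have E6' : j + 1 - (u + 2) = w := by omega
      have E7 : j - u = w + 1 := by omega
      have E8 : j - (u + 1) = w := by omega
      fin_cases b <;>
        simp (config := { decide := true }) [e40, e41, e42, e43, e44, e45, e46, e47,
          yv, alf, bet, gam, cf, tf, E2, E3, E4, E5, E6, E5', E6', E7, E8, hu] <;>
        push_cast <;>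
        [linear_combination (Cc j * (-(rr^u) - rr^w)) * hr2 + (Dd j * (ssc^w - ssc^u)) * hs2;
         linear_combination (Dd j * (ssc^u - ssc^w)) * hs2;
         linear_combination (Cc j * (rr^u + rr^w)) * hr2 + (Dd j * (ssc^w - ssc^u)) * hs2;
         linear_combination (Dd j * (ssc^u - ssc^w)) * hs2]

noncomputable def Bf (j : ℕ) : ℝ := 2*Cc j*(1+rr^(j+1))
noncomputable def Gf (j : ℕ) : ℝ := 2*Dd j*(1-ssc^(j+1))

lemma resDist_formula (j : ℕ) :
    resDist ((SimpleGraph.pathGraph (j+2)).boxProd (SimpleGraph.cycleGraph 4))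
        (⟨0, (by omega : 0 < j + 1 + 1)⟩, 0) (Fin.last (j+1), 2)
      = ((j:ℝ)+1)/4 + Bf j + Gf j := by
  have hconn : ((SimpleGraph.pathGraph (j+2)).boxProd (SimpleGraph.cycleGraph 4)).Connected :=
    (SimpleGraph.connected_boxProd).mpr
      ⟨SimpleGraph.pathGraph_connected _, SimpleGraph.cycleGraph_connected⟩
  have hex := lapm_penrose_exists _ hconn
  rw [resDist, effRes_eq_of_sol _ (lapm_symm _) hex _ _ (yv j) (yv_solves j)]
  rw [sub_dotProduct, single_dotProduct, single_dotProduct]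
  simp only [one_mul]
  have h1 : j + 1 - (j + 1) = 0 := by omega
  simp (config := { decide := true }) [yv, alf, bet, gam, cf, tf, Fin.val_last, h1]
  push_cast
  rw [Bf, Gf]
  ring

lemma Bf_tendsto : Filter.Tendsto Bf Filter.atTop (nhds (rr/(3*rr-1))) := by
  have hr0 : (0:ℝ) < rr := lt_trans one_pos hr_gt
  have h3r : (0:ℝ) < 3*rr - 1 := by nlinarith [hr_gt]
  have heq : ∀ j : ℕ, Bf j = ((1/rr)^j + rr) / ((3-rr)*(1/rr)^j + (3*rr-1)) := by
    intro j
    have hX := Cden_pos j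
    have hrj : (0:ℝ) < rr^j := pow_pos hr0 j
    have hden : (3-rr)*(1/rr)^j + (3*rr-1) = ((3-rr) + rr^j*(3*rr-1))/rr^j := by
      simp only [div_pow, one_pow]
      field_simp
    rw [Bf, Cc, hden, div_div_eq_mul_div, eq_div_iff hX.ne']
    simp only [div_pow, one_pow]
    field_simp
    ring
  have h0 : Filter.Tendsto (fun j : ℕ => (1/rr)^j) Filter.atTop (nhds 0) :=
    tendsto_pow_atTop_nhds_zero_of_lt_one (by positivity)
      ((div_lt_one hr0).mpr hr_gt)
  have hnum : Filter.Tendsto (fun j : ℕ => (1/rr)^j + rr) Filter.atTop (nhds (0 + rr)) :=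
    h0.add tendsto_const_nhds
  have hden : Filter.Tendsto (fun j : ℕ => (3-rr)*(1/rr)^j + (3*rr-1)) Filter.atTop
      (nhds ((3-rr)*0 + (3*rr-1))) :=
    (tendsto_const_nhds.mul h0).add tendsto_const_nhds
  have hlim := hnum.div hden (by simpa using h3r.ne')
  refine Filter.Tendsto.congr (fun j => (heq j).symm) ?_
  have hpt : ((0:ℝ) + rr)/((3-rr)*0 + (3*rr-1)) = rr/(3*rr-1) := by norm_num
  rw [hpt] at hlim
  exact hlim

lemma Gf_tendsto : Filter.Tendsto Gf Filter.atTop (nhds (ssc/(2*(5*ssc-1)))) := by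
  have hs0 : (0:ℝ) < ssc := lt_trans one_pos hs_gt
  have h5s : (0:ℝ) < 5*ssc - 1 := by nlinarith [hs_gt]
  have heq : ∀ j : ℕ, Gf j = ((1/ssc)^j - ssc) / (2*((5-ssc)*(1/ssc)^j - (5*ssc-1))) := by
    intro j
    have hY := Dden_neg j
    have hsj : (0:ℝ) < ssc^j := pow_pos hs0 j
    have hden : 2*((5-ssc)*(1/ssc)^j - (5*ssc-1)) = 2*((5-ssc) - ssc^j*(5*ssc-1))/ssc^j := by
      simp only [div_pow, one_pow]
      field_simp
    have hYne : (5-ssc) - ssc^j*(5*ssc-1) ≠ 0 := hY.ne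
    have h2Y : (2:ℝ)*((5-ssc) - ssc^j*(5*ssc-1)) ≠ 0 := mul_ne_zero two_ne_zero hYne
    rw [Gf, Dd, hden, div_div_eq_mul_div, eq_div_iff h2Y]
    simp only [div_pow, one_pow]
    field_simp
    ring
  have h0 : Filter.Tendsto (fun j : ℕ => (1/ssc)^j) Filter.atTop (nhds 0) :=
    tendsto_pow_atTop_nhds_zero_of_lt_one (by positivity)
      ((div_lt_one hs0).mpr hs_gt)
  have hnum : Filter.Tendsto (fun j : ℕ => (1/ssc)^j - ssc) Filter.atTop (nhds (0 - ssc)) :=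
    h0.sub tendsto_const_nhds
  have hden : Filter.Tendsto (fun j : ℕ => 2*((5-ssc)*(1/ssc)^j - (5*ssc-1))) Filter.atTop
      (nhds (2*((5-ssc)*0 - (5*ssc-1)))) :=
    Filter.Tendsto.const_mul _ ((tendsto_const_nhds.mul h0).sub tendsto_const_nhds)
  have hlim := hnum.div hden (by intro h; nlinarith [h5s])
  refine Filter.Tendsto.congr (fun j => (heq j).symm) ?_
  have hpt : ((0:ℝ) - ssc)/(2*((5-ssc)*0 - (5*ssc-1))) = ssc/(2*(5*ssc-1)) := by
    rw [show ((2:ℝ)*((5-ssc)*0 - (5*ssc-1))) = -(2*(5*ssc-1)) by ring, zero_sub, neg_div_neg_eq]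
  rw [hpt] at hlim
  exact hlim


/-- Conjecture of Evans and Francis: in the block tower graphs `G_n = P_n □ C_4`,
the successive differences of the resistance distances between `(a_1,b_1)` and
`(a_n,b_3)` tend to `1/4`. -/
theorem tendsto_resDist_blockTower :
    Filter.Tendsto (fun n : ℕ =>
        resDist ((SimpleGraph.pathGraph (n + 2)).boxProd (SimpleGraph.cycleGraph 4))
            (⟨0, by omega⟩, 0) (Fin.last (n + 1), 2)
          - resDist ((SimpleGraph.pathGraph (n + 1)).boxProd (SimpleGraph.cycleGraph 4))
              (⟨0, by omega⟩, 0) (Fin.last n, 2))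
      Filter.atTop (nhds (1 / 4)) := by
  have hB := Bf_tendsto
  have hG := Gf_tendsto
  have hB1 : Filter.Tendsto (fun n : ℕ => Bf (n+1)) Filter.atTop (nhds (rr/(3*rr-1))) :=
    hB.comp (Filter.tendsto_add_atTop_nat 1)
  have hG1 : Filter.Tendsto (fun n : ℕ => Gf (n+1)) Filter.atTop (nhds (ssc/(2*(5*ssc-1)))) :=
    hG.comp (Filter.tendsto_add_atTop_nat 1)
  have hg : Filter.Tendsto (fun n : ℕ => 1/4 + (Bf (n+1) - Bf n) + (Gf (n+1) - Gf n))
      Filter.atTop (nhds (1/4)) := by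
    have h := ((tendsto_const_nhds :
        Filter.Tendsto (fun _ : ℕ => (1/4:ℝ)) Filter.atTop (nhds (1/4))).add
      (hB1.sub hB)).add (hG1.sub hG)
    simpa using h
  have hcomp := hg.comp (Filter.tendsto_sub_atTop_nat 1)
  refine Filter.Tendsto.congr' ?_ hcomp
  filter_upwards [Filter.eventually_ge_atTop 1] with n hn
  obtain ⟨m, rfl⟩ : ∃ m, n = m + 1 := ⟨n - 1, by omega⟩
  show (1:ℝ)/4 + (Bf ((m+1) - 1 + 1) - Bf ((m+1) - 1)) + (Gf ((m+1) - 1 + 1) - Gf ((m+1) - 1))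
    = _
  simp only [Nat.add_sub_cancel]
  rw [resDist_formula (m+1), show (SimpleGraph.pathGraph (m+1+1)) = SimpleGraph.pathGraph (m+2) from rfl,
    show Fin.last (m+1) = Fin.last (m+1) from rfl, resDist_formula m]
  push_cast
  ring
end

section
/- In G_n = P_n □ C_4, the identity R_{G_n}[(a_1,b_1),(a_n,b_3)] = R_{L_n}[(a_1,c_1),(a_n,c_2)] + (1/4)·R_{C^4_{P_n}}[a_1,a_n] − (n−1)/4 holds, where L_n = P_n □ K_2 is the ladder graph and C^4_{P_n} is the weighted fan graph with apex conductance 4. -/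
open Matrix Finset

section Penrose

variable {m : Type*} [Fintype m] [DecidableEq m]

lemma penrose_exists {A : Matrix m m ℝ} (hA : A.IsHermitian) :
    ∃ B : Matrix m m ℝ,
      A * B * A = A ∧ B * A * B = B ∧ (A * B)ᵀ = A * B ∧ (B * A)ᵀ = B * A := by
  classical
  set U : Matrix m m ℝ := (hA.eigenvectorUnitary : Matrix m m ℝ) with hUdef
  have hmem := hA.eigenvectorUnitary.2
  have hsU : star U * U = 1 := (Matrix.mem_unitaryGroup_iff'.mp hmem)
  have hUs : U * star U = 1 := (Matrix.mem_unitaryGroup_iff.mp hmem)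
  set d : m → ℝ := hA.eigenvalues with hd
  have hAeq : A = U * diagonal d * star U := by
    have := hA.spectral_theorem
    rw [this, Unitary.conjStarAlgAut_apply, hUdef, hd]
    rfl
  -- helper: products of the form U * diagonal e * star U
  have key : ∀ e f : m → ℝ,
      (U * diagonal e * star U) * (U * diagonal f * star U)
        = U * diagonal (fun i => e i * f i) * star U := by
    intro e f
    have h1 : diagonal e * (star U * (U * (diagonal f * star U)))
        = diagonal (fun i => e i * f i) * star U := by
      rw [← mul_assoc (star U) U, hsU, one_mul, ← mul_assoc, diagonal_mul_diagonal]
    calc (U * diagonal e * star U) * (U * diagonal f * star U)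
        = U * (diagonal e * (star U * (U * (diagonal f * star U)))) := by
          simp only [mul_assoc]
      _ = U * (diagonal (fun i => e i * f i) * star U) := by rw [h1]
      _ = U * diagonal (fun i => e i * f i) * star U := by rw [mul_assoc]
  have trans_key : ∀ e : m → ℝ, (U * diagonal e * star U)ᵀ = U * diagonal e * star U := by
    intro e
    have hstar : star U = Uᵀ := by
      rw [Matrix.star_eq_conjTranspose, Matrix.conjTranspose_eq_transpose_of_trivial]
    rw [hstar, Matrix.transpose_mul, Matrix.transpose_mul, Matrix.transpose_transpose,
      Matrix.diagonal_transpose, mul_assoc]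
  refine ⟨U * diagonal d⁻¹ * star U, ?_, ?_, ?_, ?_⟩
  · rw [hAeq, key, key]
    congr 2
    funext i
    simp only [Pi.inv_apply]
    rcases eq_or_ne (d i) 0 with h | h
    · simp [h]
    · field_simp
  · rw [hAeq, key, key]
    congr 2
    funext i j
    rcases eq_or_ne i j with rfl | hij
    · simp only [Matrix.diagonal_apply_eq, Pi.inv_apply]
      rcases eq_or_ne (d i) 0 with h | h
      · simp [h]
      · field_simp
    · rw [Matrix.diagonal_apply_ne _ hij, Matrix.diagonal_apply_ne _ hij]
  · rw [hAeq, key, trans_key]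
  · rw [hAeq, key, trans_key]

lemma effRes_eq_of_solution {L : Matrix m m ℝ} (hL : L.IsHermitian) {u v : m} {x : m → ℝ}
    (hx : L *ᵥ x = Pi.single u 1 - Pi.single v 1) :
    effRes L u v = x u - x v := by
  have hex := penrose_exists hL
  have hLt : Lᵀ = L := by
    rw [← Matrix.conjTranspose_eq_transpose_of_trivial]; exact hL
  rw [effRes, Matrix.mpinv, dif_pos hex]
  obtain ⟨h1, _, _, _⟩ := hex.choose_spec
  set B := hex.choose with hB
  have hwx : L *ᵥ x = Pi.single u 1 - Pi.single v 1 := hx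
  rw [← hwx]
  have hvm : L *ᵥ x = x ᵥ* L := by
    rw [← hLt, Matrix.mulVec_transpose, hLt]
  calc (L *ᵥ x) ⬝ᵥ (B *ᵥ (L *ᵥ x))
      = (L *ᵥ x) ⬝ᵥ ((B * L) *ᵥ x) := by rw [Matrix.mulVec_mulVec]
    _ = ((L *ᵥ x) ᵥ* (B * L)) ⬝ᵥ x := by rw [Matrix.dotProduct_mulVec]
    _ = ((x ᵥ* L) ᵥ* (B * L)) ⬝ᵥ x := by rw [hvm]
    _ = (x ᵥ* (L * (B * L))) ⬝ᵥ x := by rw [Matrix.vecMul_vecMul]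
    _ = (x ᵥ* L) ⬝ᵥ x := by rw [← mul_assoc, h1]
    _ = x ⬝ᵥ (L *ᵥ x) := by rw [← Matrix.dotProduct_mulVec]
    _ = x u - x v := by
        rw [hwx, dotProduct_sub, dotProduct_single, dotProduct_single, mul_one, mul_one]

end Penrose
section Lap

open Classical in
lemma lapm_isHermitian {V : Type*} [Fintype V] [DecidableEq V] (G : SimpleGraph V) :
    (lapm G).IsHermitian := by
  rw [Matrix.IsHermitian, Matrix.conjTranspose_eq_transpose_of_trivial]
  exact SimpleGraph.isSymm_lapMatrix (R := ℝ) (G := G)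

open Classical in
lemma lapm_mulVec {V : Type*} [Fintype V] [DecidableEq V] (G : SimpleGraph V)
    (x : V → ℝ) (i : V) :
    (lapm G *ᵥ x) i = ∑ j, if G.Adj i j then x i - x j else 0 := by
  unfold lapm
  rw [SimpleGraph.lapMatrix_mulVec_apply]
  have h1 : ∑ j, (if G.Adj i j then x i - x j else 0)
      = ∑ j ∈ G.neighborFinset i, (x i - x j) := by
    rw [SimpleGraph.neighborFinset_eq_filter, Finset.sum_filter]
  rw [h1, Finset.sum_sub_distrib, Finset.sum_const, nsmul_eq_mul]
  rfl

open Classical in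
lemma lapm_boxProd_mulVec_s15 {α β : Type*} [Fintype α] [Fintype β] [DecidableEq α] [DecidableEq β]
    (G : SimpleGraph α) (H : SimpleGraph β) (x : α × β → ℝ) (i : α) (k : β) :
    (lapm (G.boxProd H) *ᵥ x) (i, k)
      = (∑ j, if G.Adj i j then x (i, k) - x (j, k) else 0)
        + (∑ l, if H.Adj k l then x (i, k) - x (i, l) else 0) := by
  rw [lapm_mulVec, Fintype.sum_prod_type]
  have split : ∀ (j : α) (l : β),
      (if (G.boxProd H).Adj (i, k) (j, l) then x (i, k) - x (j, l) else 0)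
        = (if G.Adj i j ∧ k = l then x (i, k) - x (j, l) else 0)
          + (if i = j ∧ H.Adj k l then x (i, k) - x (j, l) else 0) := by
    intro j l
    by_cases h1 : G.Adj i j ∧ k = l <;> by_cases h2 : i = j ∧ H.Adj k l
    · exact absurd (h2.1 ▸ h1.1) (G.loopless.irrefl i)
    · simp [SimpleGraph.boxProd_adj, h1, h2]
    · simp [SimpleGraph.boxProd_adj, h1, h2]
    · have hna : ¬ (G.boxProd H).Adj (i, k) (j, l) := by
        rw [SimpleGraph.boxProd_adj]; tauto
      rw [if_neg hna, if_neg h1, if_neg h2, add_zero]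
  simp_rw [split, Finset.sum_add_distrib]
  congr 1
  · apply Finset.sum_congr rfl
    intro j _
    by_cases hP : G.Adj i j
    · simp only [hP, true_and, if_true]
      rw [Finset.sum_ite_eq, if_pos (Finset.mem_univ k)]
    · simp [hP]
  · have inner2 : ∀ j : α, (∑ l, if i = j ∧ H.Adj k l then x (i, k) - x (j, l) else 0)
        = if i = j then (∑ l, if H.Adj k l then x (i, k) - x (j, l) else 0) else 0 := by
      intro j
      by_cases hij : i = j
      · simp [hij]
      · simp [hij]
    simp_rw [inner2]
    rw [Finset.sum_ite_eq, if_pos (Finset.mem_univ i)]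

end Lap
section PathComp

lemma fin_sum_ite_val {n : ℕ} (t : ℕ) (f : Fin n → ℝ) :
    (∑ j : Fin n, if t = (j : ℕ) then f j else 0)
      = if h : t < n then f ⟨t, h⟩ else 0 := by
  split
  next h =>
    rw [Finset.sum_eq_single (⟨t, h⟩ : Fin n)]
    · rw [if_pos rfl]
    · intro b _ hb
      exact if_neg fun hc => hb (Fin.ext hc.symm)
    · intro hmem; exact absurd (Finset.mem_univ _) hmem
  next h =>
    refine Finset.sum_eq_zero fun j _ => if_neg fun hc => h ?_
    have := j.2; omega

open Classical in
lemma path_sum (n : ℕ) (x : Fin n → ℝ) (i : Fin n) :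
    (∑ j, if (SimpleGraph.pathGraph n).Adj i j then x i - x j else 0)
      = (if h : (i : ℕ) + 1 < n then x i - x ⟨(i : ℕ) + 1, h⟩ else 0)
        + (if h : 1 ≤ (i : ℕ) then
            x i - x ⟨(i : ℕ) - 1, lt_of_le_of_lt (Nat.sub_le _ _) i.2⟩ else 0) := by
  have split : ∀ j : Fin n,
      (if (SimpleGraph.pathGraph n).Adj i j then x i - x j else 0)
        = (if (i : ℕ) + 1 = (j : ℕ) then x i - x j else 0)
          + (if ((i : ℕ) - 1 = (j : ℕ) ∧ 1 ≤ (i : ℕ)) then x i - x j else 0) := by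
    intro j
    by_cases h1 : (i : ℕ) + 1 = (j : ℕ) <;>
      by_cases h2 : ((i : ℕ) - 1 = (j : ℕ) ∧ 1 ≤ (i : ℕ))
    · omega
    · rw [if_pos, if_pos h1, if_neg h2, add_zero]
      rw [SimpleGraph.pathGraph_adj]; omega
    · rw [if_pos, if_neg h1, if_pos h2, zero_add]
      rw [SimpleGraph.pathGraph_adj]; omega
    · rw [if_neg, if_neg h1, if_neg h2, add_zero]
      rw [SimpleGraph.pathGraph_adj]; omega
  simp_rw [split, Finset.sum_add_distrib]
  congr 1
  · rw [fin_sum_ite_val]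
  · by_cases h2 : 1 ≤ (i : ℕ)
    · have hconv : ∀ j : Fin n, (if ((i : ℕ) - 1 = (j : ℕ) ∧ 1 ≤ (i : ℕ)) then x i - x j else 0)
          = (if (i : ℕ) - 1 = (j : ℕ) then x i - x j else 0) := fun j => by
        by_cases hc : (i : ℕ) - 1 = (j : ℕ) <;> simp [hc, h2]
      simp_rw [hconv]
      rw [fin_sum_ite_val, dif_pos h2,
        dif_pos (lt_of_le_of_lt (Nat.sub_le _ _) i.2)]
    · rw [dif_neg h2]
      refine Finset.sum_eq_zero fun j _ => if_neg fun hc => h2 hc.2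

noncomputable def X0fun (n : ℕ) : Fin n → ℝ := fun i => (n : ℝ) - 1 - (i : ℕ)

lemma X0fun_apply (n : ℕ) (i : Fin n) : X0fun n i = (n : ℝ) - 1 - (i : ℕ) := rfl

lemma path_X0 (n : ℕ) (hn : 0 < n) :
    lapm (SimpleGraph.pathGraph n) *ᵥ X0fun n
      = Pi.single (⟨0, by omega⟩ : Fin n) 1 - Pi.single (⟨n - 1, by omega⟩ : Fin n) 1 := by
  funext i
  rw [lapm_mulVec, path_sum]
  simp only [Pi.sub_apply, Pi.single_apply, X0fun_apply]
  by_cases h1 : (i : ℕ) + 1 < n <;> by_cases h2 : 1 ≤ (i : ℕ)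
  · rw [dif_pos h1, dif_pos h2,
      if_neg (Fin.ne_of_val_ne (by omega : (i : ℕ) ≠ 0)),
      if_neg (Fin.ne_of_val_ne (by omega : (i : ℕ) ≠ n - 1))]
    rw [Nat.cast_sub h2]
    push_cast
    ring
  · rw [dif_pos h1, dif_neg h2,
      if_pos (Fin.ext (by omega : (i : ℕ) = 0)),
      if_neg (Fin.ne_of_val_ne (by omega : (i : ℕ) ≠ n - 1))]
    push_cast
    ring
  · rw [dif_neg h1, dif_pos h2,
      if_neg (Fin.ne_of_val_ne (by omega : (i : ℕ) ≠ 0)),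
      if_pos (Fin.ext (by omega : (i : ℕ) = n - 1))]
    rw [Nat.cast_sub h2]
    push_cast
    ring
  · rw [dif_neg h1, dif_neg h2,
      if_pos (Fin.ext (by omega : (i : ℕ) = 0)),
      if_pos (Fin.ext (by omega : (i : ℕ) = n - 1))]
    ring

end PathComp
section Vectors

def cfun : Fin 4 → ℝ := ![1, 0, -1, 0]
def sfun : Fin 4 → ℝ := ![1, -1, 1, -1]
def dfun : Fin 2 → ℝ := ![1, -1]

open Classical in
lemma cyc_c (k : Fin 4) :
    (∑ l, @ite ℝ ((SimpleGraph.cycleGraph 4).Adj k l) (Classical.propDecidable _)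
        (cfun k - cfun l) 0)
      = 2 * cfun k := by
  have hinst : ∀ l, @ite ℝ ((SimpleGraph.cycleGraph 4).Adj k l) (Classical.propDecidable _)
      (cfun k - cfun l) 0 = if (SimpleGraph.cycleGraph 4).Adj k l then cfun k - cfun l else 0 :=
    fun l => by congr
  simp_rw [hinst]
  fin_cases k <;>
  · rw [Fin.sum_univ_four]
    simp (config := { decide := true }) only [SimpleGraph.cycleGraph_adj]
    norm_num [cfun, Matrix.cons_val_three, Matrix.cons_val_two]

open Classical in
lemma cyc_s (k : Fin 4) :
    (∑ l, @ite ℝ ((SimpleGraph.cycleGraph 4).Adj k l) (Classical.propDecidable _)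
        (sfun k - sfun l) 0)
      = 4 * sfun k := by
  have hinst : ∀ l, @ite ℝ ((SimpleGraph.cycleGraph 4).Adj k l) (Classical.propDecidable _)
      (sfun k - sfun l) 0 = if (SimpleGraph.cycleGraph 4).Adj k l then sfun k - sfun l else 0 :=
    fun l => by congr
  simp_rw [hinst]
  fin_cases k <;>
  · rw [Fin.sum_univ_four]
    simp (config := { decide := true }) only [SimpleGraph.cycleGraph_adj]
    norm_num [sfun, Matrix.cons_val_three, Matrix.cons_val_two]

open Classical in
lemma path2_d (k : Fin 2) :
    (∑ l, if (SimpleGraph.pathGraph 2).Adj k l then dfun k - dfun l else 0)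
      = 2 * dfun k := by
  fin_cases k <;>
  · rw [Fin.sum_univ_two]
    simp (config := { decide := true }) only [SimpleGraph.pathGraph_adj]
    norm_num [dfun]

end Vectors
section Shift

open Classical in
lemma lapm_posSemidef {V : Type*} [Fintype V] [DecidableEq V] (G : SimpleGraph V) :
    (lapm G).PosSemidef := by
  unfold lapm
  exact SimpleGraph.posSemidef_lapMatrix ℝ G

lemma exists_shift_solution {V : Type*} [Fintype V] [DecidableEq V] (G : SimpleGraph V)
    (c : ℝ) (hc : 0 < c) (w : V → ℝ) :
    ∃ x : V → ℝ, ∀ i, (lapm G *ᵥ x) i = w i - c * x i := by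
  classical
  set M : Matrix V V ℝ := lapm G + Matrix.diagonal (fun _ => c) with hM
  have hpd : M.PosDef :=
    Matrix.PosDef.posSemidef_add (lapm_posSemidef G)
      (Matrix.posDef_diagonal_iff.mpr fun _ => hc)
  have hdet : IsUnit M.det := (Matrix.isUnit_iff_isUnit_det M).mp hpd.isUnit
  refine ⟨M⁻¹ *ᵥ w, fun i => ?_⟩
  have hsol : M *ᵥ (M⁻¹ *ᵥ w) = w := by
    rw [Matrix.mulVec_mulVec, Matrix.mul_nonsing_inv _ hdet, Matrix.one_mulVec]
  have := congrFun hsol i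
  rw [hM, Matrix.add_mulVec] at this
  simp only [Pi.add_apply, Matrix.mulVec_diagonal] at this
  linarith [this]

open Classical in
lemma sum_lapm_mulVec_eq_zero {V : Type*} [Fintype V] [DecidableEq V] (G : SimpleGraph V)
    (x : V → ℝ) : ∑ i, (lapm G *ᵥ x) i = 0 := by
  simp_rw [lapm_mulVec]
  have h1 : ∑ i, ∑ j, (if G.Adj i j then x i - x j else 0)
      = ∑ j, ∑ i, (if G.Adj i j then x i - x j else 0) := Finset.sum_comm
  have h2 : ∀ i j : V, (if G.Adj j i then x j - x i else 0)
      = -(if G.Adj i j then x i - x j else 0) := by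
    intro i j
    by_cases h : G.Adj i j
    · rw [if_pos h, if_pos (G.adj_symm h)]; ring
    · rw [if_neg h, if_neg (fun hc => h (G.adj_symm hc)), neg_zero]
  have h3 : ∑ i, ∑ j, (if G.Adj i j then x i - x j else 0)
      = -∑ i, ∑ j, (if G.Adj i j then x i - x j else 0) := by
    nth_rewrite 1 [h1]
    rw [← Finset.sum_neg_distrib]
    refine Finset.sum_congr rfl fun j _ => ?_
    rw [← Finset.sum_neg_distrib]
    exact Finset.sum_congr rfl fun i _ => h2 j i
  linarith [h3]

end Shift

section Cone

open Classical in
lemma coneLap_isHermitian {V : Type*} [Fintype V] [DecidableEq V]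
    (G : SimpleGraph V) (m : ℝ) : (coneLap G m).IsHermitian := by
  rw [Matrix.IsHermitian, Matrix.conjTranspose_eq_transpose_of_trivial]
  unfold coneLap
  ext q r
  simp only [Matrix.transpose_apply, Matrix.of_apply]
  have hW : ∀ a b : V ⊕ Unit,
      (match a, b with
        | Sum.inl a, Sum.inl b => if G.Adj a b then (1:ℝ) else 0
        | Sum.inl _, Sum.inr _ => m
        | Sum.inr _, Sum.inl _ => m
        | Sum.inr _, Sum.inr _ => 0) =
      (match b, a with
        | Sum.inl a, Sum.inl b => if G.Adj a b then (1:ℝ) else 0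
        | Sum.inl _, Sum.inr _ => m
        | Sum.inr _, Sum.inl _ => m
        | Sum.inr _, Sum.inr _ => 0) := by
    rintro (a | a) (b | b) <;> simp [SimpleGraph.adj_comm]
  by_cases h : q = r
  · subst h; rw [hW]
  · rw [if_neg h, if_neg (Ne.symm h), hW]

open Classical in
lemma coneLap_mulVec {V : Type*} [Fintype V] [DecidableEq V]
    (G : SimpleGraph V) (m : ℝ) (x : V → ℝ) :
    coneLap G m *ᵥ (Sum.elim x fun _ => 0)
      = Sum.elim (fun a => (lapm G *ᵥ x) a + m * x a)
          (fun _ => -m * ∑ b, x b) := by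
  funext q
  rw [Matrix.mulVec]
  cases q with
  | inl a =>
    have : (fun j => coneLap G m (Sum.inl a) j) ⬝ᵥ (Sum.elim x fun _ => 0)
        = ∑ j, coneLap G m (Sum.inl a) j * (Sum.elim x fun _ => 0) j := rfl
    rw [this, Fintype.sum_sum_type]
    simp only [Sum.elim_inl, Sum.elim_inr, mul_zero, Finset.sum_const, smul_zero, add_zero]
    have hentry : ∀ b : V, coneLap G m (Sum.inl a) (Sum.inl b)
        = (if a = b then ((∑ j, if G.Adj a j then (1:ℝ) else 0) + m) else 0)
          - (if G.Adj a b then (1:ℝ) else 0) := by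
      intro b
      show ((if (Sum.inl a : V ⊕ Unit) = Sum.inl b then _ else 0) - _ : ℝ) = _
      by_cases h : a = b
      · subst h
        rw [if_pos rfl, if_pos rfl]
        congr 1
        rw [Fintype.sum_sum_type]
        simp
      · rw [if_neg (by simp [h]), if_neg h]
    simp_rw [hentry, sub_mul, ite_mul, zero_mul, one_mul]
    rw [Finset.sum_sub_distrib, Finset.sum_ite_eq, if_pos (Finset.mem_univ a), lapm_mulVec]
    have hx : ∑ j, (if G.Adj a j then x a - x j else 0)
        = (∑ j, if G.Adj a j then (1:ℝ) else 0) * x a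
          - ∑ j, (if G.Adj a j then x j else 0) := by
      rw [Finset.sum_mul, ← Finset.sum_sub_distrib]
      refine Finset.sum_congr rfl fun j _ => ?_
      by_cases h : G.Adj a j <;> simp [h]
    rw [hx]
    ring
  | inr u =>
    have : (fun j => coneLap G m (Sum.inr u) j) ⬝ᵥ (Sum.elim x fun _ => 0)
        = ∑ j, coneLap G m (Sum.inr u) j * (Sum.elim x fun _ => 0) j := rfl
    rw [this, Fintype.sum_sum_type]
    have hentry : ∀ b : V, coneLap G m (Sum.inr u) (Sum.inl b) = -m := by
      intro b
      show ((if (Sum.inr u : V ⊕ Unit) = Sum.inl b then _ else 0) - m : ℝ) = -m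
      rw [if_neg (by simp), zero_sub]
    have h1 : ∀ b : V, coneLap G m (Sum.inr u) (Sum.inl b)
        * (Sum.elim x fun _ => (0:ℝ)) ((Sum.inl b : V ⊕ Unit)) = -m * x b := by
      intro b; rw [hentry b]; simp
    have h2 : ∀ u' : Unit, coneLap G m (Sum.inr u) (Sum.inr u')
        * (Sum.elim x fun _ => (0:ℝ)) ((Sum.inr u' : V ⊕ Unit)) = 0 := by
      intro u'; simp
    simp_rw [h1, h2]
    rw [Finset.sum_const, smul_zero, add_zero, Sum.elim_inr, ← Finset.mul_sum]

end Cone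
section BoxSol

noncomputable def gvec (n : ℕ) (x0 x2 x4 : Fin n → ℝ) : Fin n × Fin 4 → ℝ :=
  fun p => (1/4) * x0 p.1 + (1/2) * x2 p.1 * cfun p.2 + (1/4) * x4 p.1 * sfun p.2

lemma gvec_apply (n : ℕ) (x0 x2 x4 : Fin n → ℝ) (i : Fin n) (k : Fin 4) :
    gvec n x0 x2 x4 (i, k)
      = (1/4) * x0 i + (1/2) * x2 i * cfun k + (1/4) * x4 i * sfun k := rfl

noncomputable def lvec (n : ℕ) (x0 x2 : Fin n → ℝ) : Fin n × Fin 2 → ℝ :=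
  fun p => (1/2) * x0 p.1 + (1/2) * x2 p.1 * dfun p.2

lemma lvec_apply (n : ℕ) (x0 x2 : Fin n → ℝ) (i : Fin n) (k : Fin 2) :
    lvec n x0 x2 (i, k) = (1/2) * x0 i + (1/2) * x2 i * dfun k := rfl

open Classical in
lemma gvec_sol (n : ℕ) (i0 in' : Fin n) (x2 x4 : Fin n → ℝ)
    (h0 : lapm (SimpleGraph.pathGraph n) *ᵥ X0fun n
      = Pi.single i0 1 - Pi.single in' 1)
    (h2 : ∀ i, (lapm (SimpleGraph.pathGraph n) *ᵥ x2) i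
      = (Pi.single i0 1 + Pi.single in' 1 : Fin n → ℝ) i - 2 * x2 i)
    (h4 : ∀ i, (lapm (SimpleGraph.pathGraph n) *ᵥ x4) i
      = (Pi.single i0 1 - Pi.single in' 1 : Fin n → ℝ) i - 4 * x4 i) :
    lapm ((SimpleGraph.pathGraph n).boxProd (SimpleGraph.cycleGraph 4))
        *ᵥ gvec n (X0fun n) x2 x4
      = Pi.single (i0, (0 : Fin 4)) 1 - Pi.single (in', (2 : Fin 4)) 1 := by
  funext p
  obtain ⟨i, k⟩ := p
  rw [lapm_boxProd_mulVec_s15]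
  have hA : (∑ j, if (SimpleGraph.pathGraph n).Adj i j then
        gvec n (X0fun n) x2 x4 (i, k) - gvec n (X0fun n) x2 x4 (j, k) else 0)
      = (1/4) * ((lapm (SimpleGraph.pathGraph n) *ᵥ X0fun n) i)
        + ((1/2) * cfun k) * ((lapm (SimpleGraph.pathGraph n) *ᵥ x2) i)
        + ((1/4) * sfun k) * ((lapm (SimpleGraph.pathGraph n) *ᵥ x4) i) := by
    rw [lapm_mulVec, lapm_mulVec, lapm_mulVec, Finset.mul_sum, Finset.mul_sum,
      Finset.mul_sum, ← Finset.sum_add_distrib, ← Finset.sum_add_distrib]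
    refine Finset.sum_congr rfl fun j _ => ?_
    by_cases h : (SimpleGraph.pathGraph n).Adj i j
    · rw [if_pos h, if_pos h, if_pos h, if_pos h, gvec_apply, gvec_apply]
      ring
    · rw [if_neg h, if_neg h, if_neg h, if_neg h]; ring
  have hB : (∑ l, @ite ℝ ((SimpleGraph.cycleGraph 4).Adj k l) (Classical.propDecidable _)
        (gvec n (X0fun n) x2 x4 (i, k) - gvec n (X0fun n) x2 x4 (i, l)) 0)
      = ((1/2) * x2 i) * (2 * cfun k) + ((1/4) * x4 i) * (4 * sfun k) := by
    rw [← cyc_c k, ← cyc_s k, Finset.mul_sum, Finset.mul_sum, ← Finset.sum_add_distrib]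
    refine Finset.sum_congr rfl fun l _ => ?_
    by_cases h : (SimpleGraph.cycleGraph 4).Adj k l
    · rw [if_pos h, if_pos h, if_pos h, gvec_apply, gvec_apply]
      ring
    · rw [if_neg h, if_neg h, if_neg h]; ring
  rw [hA, hB, congrFun h0 i, h2 i, h4 i]
  simp only [Pi.sub_apply, Pi.add_apply, Pi.single_apply, Prod.mk.injEq]
  fin_cases k <;> by_cases hi : i = i0 <;> by_cases hj : i = in' <;>
    simp (config := { decide := true }) [hi, hj, cfun, sfun] <;> ring

open Classical in
lemma lvec_sol (n : ℕ) (i0 in' : Fin n) (x2 : Fin n → ℝ)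
    (h0 : lapm (SimpleGraph.pathGraph n) *ᵥ X0fun n
      = Pi.single i0 1 - Pi.single in' 1)
    (h2 : ∀ i, (lapm (SimpleGraph.pathGraph n) *ᵥ x2) i
      = (Pi.single i0 1 + Pi.single in' 1 : Fin n → ℝ) i - 2 * x2 i) :
    lapm ((SimpleGraph.pathGraph n).boxProd (SimpleGraph.pathGraph 2))
        *ᵥ lvec n (X0fun n) x2
      = Pi.single (i0, (0 : Fin 2)) 1 - Pi.single (in', (1 : Fin 2)) 1 := by
  funext p
  obtain ⟨i, k⟩ := p
  rw [lapm_boxProd_mulVec_s15]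
  have hA : (∑ j, if (SimpleGraph.pathGraph n).Adj i j then
        lvec n (X0fun n) x2 (i, k) - lvec n (X0fun n) x2 (j, k) else 0)
      = (1/2) * ((lapm (SimpleGraph.pathGraph n) *ᵥ X0fun n) i)
        + ((1/2) * dfun k) * ((lapm (SimpleGraph.pathGraph n) *ᵥ x2) i) := by
    rw [lapm_mulVec, lapm_mulVec, Finset.mul_sum, Finset.mul_sum,
      ← Finset.sum_add_distrib]
    refine Finset.sum_congr rfl fun j _ => ?_
    by_cases h : (SimpleGraph.pathGraph n).Adj i j
    · rw [if_pos h, if_pos h, if_pos h, lvec_apply, lvec_apply]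
      ring
    · rw [if_neg h, if_neg h, if_neg h]; ring
  have hB : (∑ l, if (SimpleGraph.pathGraph 2).Adj k l then
        lvec n (X0fun n) x2 (i, k) - lvec n (X0fun n) x2 (i, l) else 0)
      = ((1/2) * x2 i) * (2 * dfun k) := by
    rw [← path2_d k, Finset.mul_sum]
    refine Finset.sum_congr rfl fun l _ => ?_
    by_cases h : (SimpleGraph.pathGraph 2).Adj k l
    · rw [if_pos h, if_pos h, lvec_apply, lvec_apply]
      ring
    · rw [if_neg h, if_neg h]; ring
  rw [hA, hB, congrFun h0 i, h2 i]
  simp only [Pi.sub_apply, Pi.add_apply, Pi.single_apply, Prod.mk.injEq]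
  fin_cases k <;> by_cases hi : i = i0 <;> by_cases hj : i = in' <;>
    simp (config := { decide := true }) [hi, hj, dfun] <;> ring

end BoxSol

/-- Decomposition of the diagonal resistance distance of the block tower graph
`G_n = P_n □ C_4` via the ladder graph `L_n` and the weighted fan `C^4_{P_n}`. -/
theorem resDist_blockTower_decomposition (n : ℕ) (hn : 1 ≤ n) :
    resDist ((SimpleGraph.pathGraph n).boxProd (SimpleGraph.cycleGraph 4))
        (⟨0, by omega⟩, 0) (⟨n - 1, by omega⟩, 2)
      = resDist ((SimpleGraph.pathGraph n).boxProd (SimpleGraph.pathGraph 2))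
          (⟨0, by omega⟩, 0) (⟨n - 1, by omega⟩, 1)
        + (1 / 4) * effRes (coneLap (SimpleGraph.pathGraph n) 4)
            (Sum.inl ⟨0, by omega⟩) (Sum.inl ⟨n - 1, by omega⟩)
        - ((n : ℝ) - 1) / 4 := by
  set i0 : Fin n := ⟨0, by omega⟩ with hi0
  set in' : Fin n := ⟨n - 1, by omega⟩ with hin
  obtain ⟨x2, h2⟩ := exists_shift_solution (SimpleGraph.pathGraph n) 2 (by norm_num)
    (Pi.single i0 1 + Pi.single in' 1)
  obtain ⟨x4, h4⟩ := exists_shift_solution (SimpleGraph.pathGraph n) 4 (by norm_num)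
    (Pi.single i0 1 - Pi.single in' 1)
  have h0 : lapm (SimpleGraph.pathGraph n) *ᵥ X0fun n
      = Pi.single i0 1 - Pi.single in' 1 := path_X0 n hn
  -- sum of x4 vanishes
  have hsum : ∑ b, x4 b = 0 := by
    have hs := sum_lapm_mulVec_eq_zero (SimpleGraph.pathGraph n) x4
    simp_rw [h4] at hs
    rw [Finset.sum_sub_distrib] at hs
    have hsingle0 : ∑ i, (Pi.single i0 1 - Pi.single in' 1 : Fin n → ℝ) i = 0 := by
      simp only [Pi.sub_apply, Pi.single_apply]
      rw [Finset.sum_sub_distrib, Finset.sum_ite_eq', Finset.sum_ite_eq',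
        if_pos (Finset.mem_univ i0), if_pos (Finset.mem_univ in'), sub_self]
    rw [hsingle0, ← Finset.mul_sum] at hs
    linarith
  -- cone solution
  have hcone : coneLap (SimpleGraph.pathGraph n) 4 *ᵥ (Sum.elim x4 fun _ => 0)
      = Pi.single (Sum.inl i0) 1 - Pi.single (Sum.inl in') 1 := by
    rw [coneLap_mulVec]
    funext q
    cases q with
    | inl a =>
      simp only [Sum.elim_inl, Pi.sub_apply, Pi.single_apply]
      rw [h4 a]
      simp only [Pi.sub_apply, Pi.single_apply, Sum.inl.injEq]
      ring
    | inr u =>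
      simp only [Sum.elim_inr, Pi.sub_apply, Pi.single_apply, hsum]
      rw [if_neg (by simp), if_neg (by simp)]
      ring
  -- the three effective resistances
  have e1 : resDist ((SimpleGraph.pathGraph n).boxProd (SimpleGraph.cycleGraph 4))
        (i0, 0) (in', 2)
      = gvec n (X0fun n) x2 x4 (i0, 0) - gvec n (X0fun n) x2 x4 (in', 2) :=
    effRes_eq_of_solution (lapm_isHermitian _) (gvec_sol n i0 in' x2 x4 h0 h2 h4)
  have e2 : resDist ((SimpleGraph.pathGraph n).boxProd (SimpleGraph.pathGraph 2))
        (i0, 0) (in', 1)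
      = lvec n (X0fun n) x2 (i0, 0) - lvec n (X0fun n) x2 (in', 1) :=
    effRes_eq_of_solution (lapm_isHermitian _) (lvec_sol n i0 in' x2 h0 h2)
  have e3 : effRes (coneLap (SimpleGraph.pathGraph n) 4) (Sum.inl i0) (Sum.inl in')
      = Sum.elim x4 (fun _ => (0:ℝ)) (Sum.inl i0)
        - Sum.elim x4 (fun _ => (0:ℝ)) (Sum.inl in') :=
    effRes_eq_of_solution (coneLap_isHermitian _ _) hcone
  rw [e1, e2, e3]
  have hX00 : X0fun n i0 = (n : ℝ) - 1 := by
    rw [X0fun_apply, hi0]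
    norm_num
  have hX0n : X0fun n in' = 0 := by
    rw [X0fun_apply, hin]
    simp only []
    rw [Nat.cast_sub hn]
    push_cast
    ring
  rw [gvec_apply, gvec_apply, lvec_apply, lvec_apply, Sum.elim_inl, Sum.elim_inl,
    hX00, hX0n]
  have c0 : cfun 0 = 1 := rfl
  have c2 : cfun 2 = -1 := rfl
  have s0 : sfun 0 = 1 := rfl
  have s2 : sfun 2 = 1 := rfl
  have d0 : dfun 0 = 1 := rfl
  have d1 : dfun 1 = -1 := rfl
  rw [c0, c2, s0, s2, d0, d1]
  ring
end

section
/- In G_n = P_n □ C_4 with n ≥ 2, R_{G_n}[(a_1,b_1),(a_n,b_2)] < R_{G_n}[(a_1,b_1),(a_n,b_3)]. -/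
open Matrix Finset

section Helpers


lemma exists_mpinv {m : Type*} [Fintype m] [DecidableEq m]
    (A : Matrix m m ℝ) (hA : Aᵀ = A) :
    ∃ B : Matrix m m ℝ,
      A * B * A = A ∧ B * A * B = B ∧ (A * B)ᵀ = A * B ∧ (B * A)ᵀ = B * A := by
  classical
  have hH : A.IsHermitian := by
    rw [Matrix.IsHermitian, Matrix.conjTranspose]
    ext i j; simpa using congrFun (congrFun hA i) j
  set U : Matrix m m ℝ := (Matrix.IsHermitian.eigenvectorUnitary hH : Matrix m m ℝ) with hU
  have hUU' : star U * U = 1 := (Matrix.mem_unitaryGroup_iff').mp (hH.eigenvectorUnitary).2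
  set d : m → ℝ := hH.eigenvalues with hd
  set g : m → ℝ := fun i => if d i = 0 then 0 else (d i)⁻¹ with hg
  have hspec : A = U * Matrix.diagonal d * star U := by
    simpa using hH.spectral_theorem
  have mulU : ∀ X Y : Matrix m m ℝ,
      (U * X * star U) * (U * Y * star U) = U * (X * Y) * star U := by
    intro X Y
    simp only [Matrix.mul_assoc]
    rw [← Matrix.mul_assoc (star U) U (Y * star U), hUU', Matrix.one_mul]
  have hdgd : Matrix.diagonal d * Matrix.diagonal g * Matrix.diagonal d
      = Matrix.diagonal d := by
    rw [Matrix.diagonal_mul_diagonal, Matrix.diagonal_mul_diagonal]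
    refine congrArg _ (funext fun i => ?_)
    simp only [Pi.mul_apply, hg]
    by_cases h : d i = 0
    · simp [h]
    · rw [if_neg h]; field_simp
  have hgdg : Matrix.diagonal g * Matrix.diagonal d * Matrix.diagonal g
      = Matrix.diagonal g := by
    rw [Matrix.diagonal_mul_diagonal, Matrix.diagonal_mul_diagonal]
    refine congrArg _ (funext fun i => ?_)
    simp only [Pi.mul_apply, hg]
    by_cases h : d i = 0
    · simp [h]
    · simp only [if_neg h]; field_simp
  have hstarU : star U = Uᵀ := by
    rw [Matrix.star_eq_conjTranspose]
    ext i j; simp [Matrix.conjTranspose_apply]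
  have hsym : ∀ p : m → ℝ, (U * Matrix.diagonal p * star U)ᵀ
      = U * Matrix.diagonal p * star U := by
    intro p
    rw [hstarU, Matrix.transpose_mul, Matrix.transpose_mul, Matrix.transpose_transpose,
      Matrix.diagonal_transpose, Matrix.mul_assoc]
  refine ⟨U * Matrix.diagonal g * star U, ?_, ?_, ?_, ?_⟩
  · rw [hspec, mulU, mulU, hdgd]
  · conv_lhs => rw [hspec, mulU, mulU, hgdg]
  · rw [hspec, mulU, Matrix.diagonal_mul_diagonal, hsym]
  · rw [hspec, mulU, Matrix.diagonal_mul_diagonal, hsym]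


lemma lapm_eq {V : Type*} [Fintype V] [DecidableEq V] (G : SimpleGraph V)
    [inst : DecidableRel G.Adj] : lapm G = G.lapMatrix ℝ := by
  unfold lapm
  exact congrArg (fun d => @SimpleGraph.lapMatrix V ℝ _ G d _ _) (Subsingleton.elim _ _)

lemma resDist_eq_of_potential {V : Type*} [Fintype V] [DecidableEq V]
    (G : SimpleGraph V) (u v : V) (y : V → ℝ)
    (h : lapm G *ᵥ y = Pi.single u 1 - Pi.single v 1) :
    resDist G u v = y u - y v := by
  classical
  set L := lapm G with hL
  obtain ⟨hex⟩ : Nonempty (∃ B : Matrix V V ℝ,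
      L * B * L = L ∧ B * L * B = B ∧ (L * B)ᵀ = L * B ∧ (B * L)ᵀ = B * L) :=
    ⟨exists_mpinv L (lapm_symm G)⟩
  have hmp : L.mpinv = hex.choose := by
    rw [Matrix.mpinv, dif_pos hex]
  have hB : L * hex.choose * L = L := hex.choose_spec.1
  have hLs : Lᵀ = L := by rw [hL]; exact lapm_symm G
  rw [resDist, effRes, hmp, ← h]
  calc (L *ᵥ y) ⬝ᵥ (hex.choose *ᵥ (L *ᵥ y))
      = y ⬝ᵥ (L *ᵥ (hex.choose *ᵥ (L *ᵥ y))) := by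
        rw [dotProduct_comm, Matrix.dotProduct_mulVec, dotProduct_comm,
          ← Matrix.mulVec_transpose, hLs]
    _ = y ⬝ᵥ ((L * hex.choose * L) *ᵥ y) := by
        rw [← Matrix.mulVec_mulVec, ← Matrix.mulVec_mulVec]
    _ = y ⬝ᵥ (L *ᵥ y) := by rw [hB]
    _ = y u - y v := by
        rw [h, dotProduct_sub]
        simp [dotProduct, Pi.single_apply]

lemma cycle4_lapm_mulVec (g : Fin 4 → ℝ) (c : Fin 4) :
    (lapm (SimpleGraph.cycleGraph 4) *ᵥ g) c = 2 * g c - g (c - 1) - g (c + 1) := by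
  rw [lapm_eq, SimpleGraph.lapMatrix_mulVec_apply]
  have hne : c - 1 ≠ c + 1 := by fin_cases c <;> decide
  have h1 : (SimpleGraph.cycleGraph 4).neighborFinset c = {c - 1, c + 1} :=
    SimpleGraph.cycleGraph_neighborFinset (n := 2)
  have h2 : (SimpleGraph.cycleGraph 4).degree c = 2 := by
    rw [← SimpleGraph.card_neighborFinset_eq_degree, h1, Finset.card_pair hne]
  rw [h1, Finset.sum_pair hne, h2]
  push_cast
  ring

lemma path_lapm_mulVec (m : ℕ) (g : ℕ → ℝ) (i : Fin (m + 2)) :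
    (lapm (SimpleGraph.pathGraph (m + 2)) *ᵥ fun j => g j.val) i =
      if i.val = 0 then g 0 - g 1
      else if i.val = m + 1 then g (m + 1) - g m
      else 2 * g i.val - g (i.val - 1) - g (i.val + 1) := by
  letI : DecidableRel (SimpleGraph.pathGraph (m + 2)).Adj := Classical.decRel _
  rw [lapm_eq, SimpleGraph.lapMatrix_mulVec_apply]
  by_cases h0 : i.val = 0
  · have h1 : (SimpleGraph.pathGraph (m + 2)).neighborFinset i = {(⟨1, by omega⟩ : Fin (m+2))} := by
      ext u
      rw [SimpleGraph.mem_neighborFinset, SimpleGraph.pathGraph_adj]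
      simp only [Finset.mem_singleton, Fin.ext_iff]
      omega
    have h2 : (SimpleGraph.pathGraph (m + 2)).degree i = 1 := by
      rw [← SimpleGraph.card_neighborFinset_eq_degree, h1, Finset.card_singleton]
    rw [h1, Finset.sum_singleton, h2, if_pos h0]
    have : g i.val = g 0 := by rw [h0]
    rw [this]
    push_cast
    ring
  · by_cases hm : i.val = m + 1
    · have h1 : (SimpleGraph.pathGraph (m + 2)).neighborFinset i
          = {(⟨m, by omega⟩ : Fin (m+2))} := by
        ext u
        rw [SimpleGraph.mem_neighborFinset, SimpleGraph.pathGraph_adj]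
        simp only [Finset.mem_singleton, Fin.ext_iff]
        omega
      have h2 : (SimpleGraph.pathGraph (m + 2)).degree i = 1 := by
        rw [← SimpleGraph.card_neighborFinset_eq_degree, h1, Finset.card_singleton]
      rw [h1, Finset.sum_singleton, h2, if_neg h0, if_pos hm]
      have : g i.val = g (m + 1) := by rw [hm]
      rw [this]
      push_cast
      ring
    · have hne : (⟨i.val - 1, by omega⟩ : Fin (m+2)) ≠ ⟨i.val + 1, by omega⟩ := by
        simp only [Ne, Fin.mk.injEq]
        omega
      have h1 : (SimpleGraph.pathGraph (m + 2)).neighborFinset i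
          = {(⟨i.val - 1, by omega⟩ : Fin (m+2)), ⟨i.val + 1, by omega⟩} := by
        ext u
        rw [SimpleGraph.mem_neighborFinset, SimpleGraph.pathGraph_adj]
        simp only [Finset.mem_insert, Finset.mem_singleton, Fin.ext_iff]
        omega
      have h2 : (SimpleGraph.pathGraph (m + 2)).degree i = 2 := by
        rw [← SimpleGraph.card_neighborFinset_eq_degree, h1, Finset.card_pair hne]
      rw [h1, Finset.sum_pair hne, h2, if_neg h0, if_neg hm]
      push_cast
      ring

lemma box_lapm_mulVec {α β : Type*} [Fintype α] [Fintype β] [DecidableEq α] [DecidableEq β]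
    (G : SimpleGraph α) (H : SimpleGraph β) (y : α × β → ℝ) (x : α × β) :
    (lapm (G.boxProd H) *ᵥ y) x
      = (lapm G *ᵥ fun a => y (a, x.2)) x.1 + (lapm H *ᵥ fun b => y (x.1, b)) x.2 := by
  classical
  obtain ⟨a, b⟩ := x
  rw [lapm_eq, lapm_eq, lapm_eq, SimpleGraph.lapMatrix_mulVec_apply,
    SimpleGraph.lapMatrix_mulVec_apply, SimpleGraph.lapMatrix_mulVec_apply,
    SimpleGraph.degree_boxProd, SimpleGraph.neighborFinset_boxProd, Finset.sum_disjUnion]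
  rw [Finset.sum_product, Finset.sum_product]
  simp only [Finset.sum_singleton]
  push_cast
  ring

end Helpers


/-- Chebyshev-like sequence for `L_P + 2I`. -/
noncomputable def sseq : ℕ → ℝ
  | 0 => 1
  | 1 => 3
  | k + 2 => 4 * sseq (k + 1) - sseq k

/-- Chebyshev-like sequence for `L_P + 4I`. -/
noncomputable def tseq : ℕ → ℝ
  | 0 => 1
  | 1 => 5
  | k + 2 => 6 * tseq (k + 1) - tseq k

lemma sseq_zero : sseq 0 = 1 := rfl
lemma sseq_one : sseq 1 = 3 := rfl
lemma sseq_rec (k : ℕ) : sseq (k + 2) = 4 * sseq (k + 1) - sseq k := rfl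
lemma tseq_zero : tseq 0 = 1 := rfl
lemma tseq_one : tseq 1 = 5 := rfl
lemma tseq_rec (k : ℕ) : tseq (k + 2) = 6 * tseq (k + 1) - tseq k := rfl

lemma sseq_pos_mono : ∀ k, 1 ≤ sseq k ∧ sseq k ≤ sseq (k + 1)
  | 0 => by norm_num [sseq_zero, sseq_one]
  | k + 1 => by
      obtain ⟨h1, h2⟩ := sseq_pos_mono k
      refine ⟨h1.trans h2, ?_⟩
      rw [sseq_rec]
      linarith

lemma tseq_pos_mono : ∀ k, 1 ≤ tseq k ∧ tseq k ≤ tseq (k + 1)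
  | 0 => by norm_num [tseq_zero, tseq_one]
  | k + 1 => by
      obtain ⟨h1, h2⟩ := tseq_pos_mono k
      refine ⟨h1.trans h2, ?_⟩
      rw [tseq_rec]
      linarith

lemma sseq_le_tseq : ∀ k, sseq k ≤ tseq k
  | 0 => by norm_num [sseq_zero, tseq_zero]
  | 1 => by norm_num [sseq_one, tseq_one]
  | k + 2 => by
      have h1 := sseq_le_tseq (k + 1)
      have h2 := sseq_le_tseq k
      have h3 := (tseq_pos_mono k).2
      have h4 := (sseq_pos_mono k).1
      rw [sseq_rec, tseq_rec]
      linarith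

lemma D2_pos (m : ℕ) : 0 < 3 * sseq (m + 1) - sseq m := by
  have h1 := (sseq_pos_mono m).1
  have h2 := (sseq_pos_mono m).2
  linarith

lemma D4_pos (m : ℕ) : 0 < 5 * tseq (m + 1) - tseq m := by
  have h1 := (tseq_pos_mono m).1
  have h2 := (tseq_pos_mono m).2
  linarith

lemma D2_lt_D4 (m : ℕ) :
    3 * sseq (m + 1) - sseq m < 5 * tseq (m + 1) - tseq m := by
  have h1 := sseq_le_tseq (m + 1)
  have h2 := (tseq_pos_mono m).2
  have h3 := (sseq_pos_mono m).1
  have h4 := (tseq_pos_mono m).1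
  have h5 := (tseq_pos_mono (m+1)).1
  linarith

/-- Fourier modes on `C₄`. -/
noncomputable def X2 (c : Fin 4) : ℝ := if c = 0 then 1 else if c = 2 then -1 else 0
noncomputable def X3 (c : Fin 4) : ℝ := if c = 1 then 1 else if c = 3 then -1 else 0
noncomputable def X4 (c : Fin 4) : ℝ := if c = 0 ∨ c = 2 then 1 else -1

noncomputable def Ag (i : ℕ) : ℝ := -(i : ℝ) / 4
noncomputable def Bg (m i : ℕ) : ℝ := sseq (m + 1 - i) / (2 * (3 * sseq (m + 1) - sseq m))
noncomputable def Cg (m i : ℕ) : ℝ := -sseq i / (2 * (3 * sseq (m + 1) - sseq m))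
noncomputable def Dg (m i : ℕ) : ℝ :=
  (tseq (m + 1 - i) + tseq i) / (4 * (5 * tseq (m + 1) - tseq m))
noncomputable def Bg' (m i : ℕ) : ℝ :=
  (sseq (m + 1 - i) + sseq i) / (2 * (3 * sseq (m + 1) - sseq m))
noncomputable def Dg' (m i : ℕ) : ℝ :=
  (tseq (m + 1 - i) - tseq i) / (4 * (5 * tseq (m + 1) - tseq m))

-- interior recurrences
lemma Ag_int (k : ℕ) (h1 : 1 ≤ k) : 2 * Ag k - Ag (k - 1) - Ag (k + 1) = 0 := by
  obtain ⟨j, rfl⟩ : ∃ j, k = j + 1 := ⟨k - 1, by omega⟩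
  unfold Ag
  rw [show j + 1 - 1 = j by omega]
  push_cast
  ring

lemma Bg_int (m k : ℕ) (h1 : 1 ≤ k) (h2 : k ≤ m) :
    4 * Bg m k - Bg m (k - 1) - Bg m (k + 1) = 0 := by
  obtain ⟨j, rfl⟩ : ∃ j, k = j + 1 := ⟨k - 1, by omega⟩
  unfold Bg
  set l := m - (j + 1) with hl
  rw [show m + 1 - (j + 1 + 1) = l by omega, show j + 1 - 1 = j by omega,
    show m + 1 - j = l + 2 by omega, show m + 1 - (j + 1) = l + 1 by omega,
    sseq_rec l]
  ring

lemma Cg_int (m k : ℕ) (h1 : 1 ≤ k) :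
    4 * Cg m k - Cg m (k - 1) - Cg m (k + 1) = 0 := by
  obtain ⟨j, rfl⟩ : ∃ j, k = j + 1 := ⟨k - 1, by omega⟩
  unfold Cg
  rw [show j + 1 - 1 = j by omega, show j + 1 + 1 = j + 2 by omega, sseq_rec j]
  ring

lemma Dg_int (m k : ℕ) (h1 : 1 ≤ k) (h2 : k ≤ m) :
    6 * Dg m k - Dg m (k - 1) - Dg m (k + 1) = 0 := by
  obtain ⟨j, rfl⟩ : ∃ j, k = j + 1 := ⟨k - 1, by omega⟩
  unfold Dg
  set l := m - (j + 1) with hl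
  rw [show m + 1 - (j + 1 + 1) = l by omega, show j + 1 - 1 = j by omega,
    show m + 1 - j = l + 2 by omega, show m + 1 - (j + 1) = l + 1 by omega,
    show j + 1 + 1 = j + 2 by omega, tseq_rec l, tseq_rec j]
  ring

lemma Bg'_int (m k : ℕ) (h1 : 1 ≤ k) (h2 : k ≤ m) :
    4 * Bg' m k - Bg' m (k - 1) - Bg' m (k + 1) = 0 := by
  obtain ⟨j, rfl⟩ : ∃ j, k = j + 1 := ⟨k - 1, by omega⟩
  unfold Bg'
  set l := m - (j + 1) with hl
  rw [show m + 1 - (j + 1 + 1) = l by omega, show j + 1 - 1 = j by omega,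
    show m + 1 - j = l + 2 by omega, show m + 1 - (j + 1) = l + 1 by omega,
    show j + 1 + 1 = j + 2 by omega, sseq_rec l, sseq_rec j]
  ring

lemma Dg'_int (m k : ℕ) (h1 : 1 ≤ k) (h2 : k ≤ m) :
    6 * Dg' m k - Dg' m (k - 1) - Dg' m (k + 1) = 0 := by
  obtain ⟨j, rfl⟩ : ∃ j, k = j + 1 := ⟨k - 1, by omega⟩
  unfold Dg'
  set l := m - (j + 1) with hl
  rw [show m + 1 - (j + 1 + 1) = l by omega, show j + 1 - 1 = j by omega,
    show m + 1 - j = l + 2 by omega, show m + 1 - (j + 1) = l + 1 by omega,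
    show j + 1 + 1 = j + 2 by omega, tseq_rec l, tseq_rec j]
  ring

-- boundary identities at 0
lemma Ag_bd0 : Ag 0 - Ag 1 = 1 / 4 := by unfold Ag; norm_num

lemma Bg_bd0 (m : ℕ) : 3 * Bg m 0 - Bg m 1 = 1 / 2 := by
  unfold Bg
  rw [Nat.sub_zero, Nat.add_sub_cancel]
  have h := D2_pos m
  field_simp

lemma Cg_bd0 (m : ℕ) : 3 * Cg m 0 - Cg m 1 = 0 := by
  unfold Cg
  rw [sseq_zero, sseq_one]
  ring

lemma Dg_bd0 (m : ℕ) : 5 * Dg m 0 - Dg m 1 = 1 / 4 := by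
  unfold Dg
  rw [Nat.sub_zero, Nat.add_sub_cancel, tseq_zero, tseq_one]
  have h := D4_pos m
  field_simp
  ring

lemma Bg'_bd0 (m : ℕ) : 3 * Bg' m 0 - Bg' m 1 = 1 / 2 := by
  unfold Bg'
  rw [Nat.sub_zero, Nat.add_sub_cancel, sseq_zero, sseq_one]
  have h := D2_pos m
  field_simp
  ring

lemma Dg'_bd0 (m : ℕ) : 5 * Dg' m 0 - Dg' m 1 = 1 / 4 := by
  unfold Dg'
  rw [Nat.sub_zero, Nat.add_sub_cancel, tseq_zero, tseq_one]
  have h := D4_pos m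
  field_simp
  ring

-- boundary identities at m+1
lemma Ag_bd1 (m : ℕ) : Ag (m + 1) - Ag m = -(1 / 4) := by
  unfold Ag; push_cast; ring

lemma Bg_bd1 (m : ℕ) : 3 * Bg m (m + 1) - Bg m m = 0 := by
  unfold Bg
  rw [Nat.sub_self, show m + 1 - m = 1 by omega, sseq_zero, sseq_one]
  ring

lemma Cg_bd1 (m : ℕ) : 3 * Cg m (m + 1) - Cg m m = -(1 / 2) := by
  unfold Cg
  have h := D2_pos m
  field_simp
  ring

lemma Dg_bd1 (m : ℕ) : 5 * Dg m (m + 1) - Dg m m = 1 / 4 := by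
  unfold Dg
  rw [Nat.sub_self, show m + 1 - m = 1 by omega, tseq_zero, tseq_one]
  have h := D4_pos m
  field_simp
  ring

lemma Bg'_bd1 (m : ℕ) : 3 * Bg' m (m + 1) - Bg' m m = 1 / 2 := by
  unfold Bg'
  rw [Nat.sub_self, show m + 1 - m = 1 by omega, sseq_zero, sseq_one]
  have h := D2_pos m
  field_simp
  ring

lemma Dg'_bd1 (m : ℕ) : 5 * Dg' m (m + 1) - Dg' m m = -(1 / 4) := by
  unfold Dg'
  rw [Nat.sub_self, show m + 1 - m = 1 by omega, tseq_zero, tseq_one]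
  have h := D4_pos m
  field_simp
  ring

/-- The potential for the pair `(a₁,b₁), (aₙ,b₂)`. -/
noncomputable def Gfun (m : ℕ) (c : Fin 4) (j : ℕ) : ℝ :=
  Ag j + Bg m j * X2 c + Cg m j * X3 c + Dg m j * X4 c

/-- The potential for the pair `(a₁,b₁), (aₙ,b₃)`. -/
noncomputable def Gfun' (m : ℕ) (c : Fin 4) (j : ℕ) : ℝ :=
  Ag j + Bg' m j * X2 c + Dg' m j * X4 c

noncomputable def Ypot (m : ℕ) (p : Fin (m + 2) × Fin 4) : ℝ := Gfun m p.2 p.1.val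
noncomputable def Ypot' (m : ℕ) (p : Fin (m + 2) × Fin 4) : ℝ := Gfun' m p.2 p.1.val


lemma Ypot_spec (m : ℕ) :
    lapm ((SimpleGraph.pathGraph (m + 2)).boxProd (SimpleGraph.cycleGraph 4)) *ᵥ Ypot m
      = Pi.single ((⟨0, by omega⟩ : Fin (m + 2)), (0 : Fin 4)) 1
        - Pi.single ((⟨m + 1, by omega⟩ : Fin (m + 2)), (1 : Fin 4)) 1 := by
  funext x
  obtain ⟨i, c⟩ := x
  rw [box_lapm_mulVec]
  have hpath : (fun a : Fin (m + 2) => Ypot m (a, c)) = fun j : Fin (m + 2) => Gfun m c j.val :=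
    rfl
  have hcyc : (fun b : Fin 4 => Ypot m (i, b)) = fun b => Gfun m b i.val := rfl
  rw [hpath, hcyc, path_lapm_mulVec m (Gfun m c) i,
    cycle4_lapm_mulVec (fun b => Gfun m b i.val) c]
  simp only [Pi.sub_apply, Pi.single_apply, Prod.mk.injEq, Fin.ext_iff]
  by_cases h0 : i.val = 0
  · rw [if_pos h0]
    have hm1 : ¬ (i.val = m + 1) := by omega
    fin_cases c <;>
      simp [Gfun, X2, X3, X4, h0, hm1, show ((-1 : Fin 4)) = 3 by decide,
        show ((4 : Fin 4)) = 0 by decide, Fin.mk_zero, Fin.mk_one,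
        show (⟨2, by omega⟩ : Fin 4) = 2 from rfl, show (⟨3, by omega⟩ : Fin 4) = 3 from rfl] <;>
      linarith [Ag_bd0, Bg_bd0 m, Cg_bd0 m, Dg_bd0 m]
  · rw [if_neg h0]
    by_cases hm : i.val = m + 1
    · rw [if_pos hm]
      fin_cases c <;>
        simp [Gfun, X2, X3, X4, hm, h0, show ((-1 : Fin 4)) = 3 by decide,
          show ((4 : Fin 4)) = 0 by decide, Fin.mk_zero, Fin.mk_one,
          show (⟨2, by omega⟩ : Fin 4) = 2 from rfl, show (⟨3, by omega⟩ : Fin 4) = 3 from rfl] <;>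
        linarith [Ag_bd1 m, Bg_bd1 m, Cg_bd1 m, Dg_bd1 m]
    · rw [if_neg hm]
      have hk1 : 1 ≤ i.val := by omega
      have hk2 : i.val ≤ m := by omega
      fin_cases c <;>
        simp [Gfun, X2, X3, X4, h0, hm, show ((-1 : Fin 4)) = 3 by decide,
          show ((4 : Fin 4)) = 0 by decide, Fin.mk_zero, Fin.mk_one,
          show (⟨2, by omega⟩ : Fin 4) = 2 from rfl, show (⟨3, by omega⟩ : Fin 4) = 3 from rfl] <;>
        linarith [Ag_int i.val hk1, Bg_int m i.val hk1 hk2, Cg_int m i.val hk1,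
          Dg_int m i.val hk1 hk2]

lemma Ypot'_spec (m : ℕ) :
    lapm ((SimpleGraph.pathGraph (m + 2)).boxProd (SimpleGraph.cycleGraph 4)) *ᵥ Ypot' m
      = Pi.single ((⟨0, by omega⟩ : Fin (m + 2)), (0 : Fin 4)) 1
        - Pi.single ((⟨m + 1, by omega⟩ : Fin (m + 2)), (2 : Fin 4)) 1 := by
  funext x
  obtain ⟨i, c⟩ := x
  rw [box_lapm_mulVec]
  have hpath : (fun a : Fin (m + 2) => Ypot' m (a, c)) = fun j : Fin (m + 2) => Gfun' m c j.val :=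
    rfl
  have hcyc : (fun b : Fin 4 => Ypot' m (i, b)) = fun b => Gfun' m b i.val := rfl
  rw [hpath, hcyc, path_lapm_mulVec m (Gfun' m c) i,
    cycle4_lapm_mulVec (fun b => Gfun' m b i.val) c]
  simp only [Pi.sub_apply, Pi.single_apply, Prod.mk.injEq, Fin.ext_iff]
  by_cases h0 : i.val = 0
  · rw [if_pos h0]
    have hm1 : ¬ (i.val = m + 1) := by omega
    fin_cases c <;>
      simp [Gfun', X2, X4, h0, hm1, show ((-1 : Fin 4)) = 3 by decide,
        show ((4 : Fin 4)) = 0 by decide, Fin.mk_zero, Fin.mk_one,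
        show (⟨2, by omega⟩ : Fin 4) = 2 from rfl, show (⟨3, by omega⟩ : Fin 4) = 3 from rfl] <;>
      linarith [Ag_bd0, Bg'_bd0 m, Dg'_bd0 m]
  · rw [if_neg h0]
    by_cases hm : i.val = m + 1
    · rw [if_pos hm]
      fin_cases c <;>
        simp [Gfun', X2, X4, hm, h0, show ((-1 : Fin 4)) = 3 by decide,
          show ((4 : Fin 4)) = 0 by decide, Fin.mk_zero, Fin.mk_one,
          show (⟨2, by omega⟩ : Fin 4) = 2 from rfl, show (⟨3, by omega⟩ : Fin 4) = 3 from rfl] <;>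
        linarith [Ag_bd1 m, Bg'_bd1 m, Dg'_bd1 m]
    · rw [if_neg hm]
      have hk1 : 1 ≤ i.val := by omega
      have hk2 : i.val ≤ m := by omega
      fin_cases c <;>
        simp [Gfun', X2, X4, h0, hm, show ((-1 : Fin 4)) = 3 by decide,
          show ((4 : Fin 4)) = 0 by decide, Fin.mk_zero, Fin.mk_one,
          show (⟨2, by omega⟩ : Fin 4) = 2 from rfl, show (⟨3, by omega⟩ : Fin 4) = 3 from rfl] <;>
        linarith [Ag_int i.val hk1, Bg'_int m i.val hk1 hk2, Dg'_int m i.val hk1 hk2]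

lemma final_ineq (m : ℕ) :
    Bg m 0 + Dg m 0 - Cg m (m + 1) + Dg m (m + 1)
      < Bg' m 0 + Bg' m (m + 1) + Dg' m 0 - Dg' m (m + 1) := by
  have key : ∀ S T d2 d4 : ℝ, 0 < d2 → 0 < d4 → d2 < d4 →
      S / (2 * d2) + (T + 1) / (4 * d4) - -S / (2 * d2) + (1 + T) / (4 * d4)
        < (S + 1) / (2 * d2) + (1 + S) / (2 * d2) + (T - 1) / (4 * d4)
          - (1 - T) / (4 * d4) := by
    intro S T d2 d4 h2 h4 hlt
    have h2' : d2 ≠ 0 := ne_of_gt h2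
    have h4' : d4 ≠ 0 := ne_of_gt h4
    have hdiff : ((S + 1) / (2 * d2) + (1 + S) / (2 * d2) + (T - 1) / (4 * d4)
          - (1 - T) / (4 * d4))
        - (S / (2 * d2) + (T + 1) / (4 * d4) - -S / (2 * d2) + (1 + T) / (4 * d4))
        = 1 / d2 - 1 / d4 := by
      field_simp
      ring
    have hinv : 1 / d4 < 1 / d2 := one_div_lt_one_div_of_lt h2 hlt
    linarith
  unfold Bg Cg Dg Bg' Dg'
  rw [Nat.sub_zero, Nat.sub_self, sseq_zero, tseq_zero]
  exact key _ _ _ _ (D2_pos m) (D4_pos m) (D2_lt_D4 m)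

/-- In `G_n = P_n □ C_4`, `R[(a₁,b₁),(aₙ,b₂)] < R[(a₁,b₁),(aₙ,b₃)]`. -/
theorem resDist_blockTower_adjacent_lt_diag (n : ℕ) (hn : 2 ≤ n) :
    resDist ((SimpleGraph.pathGraph n).boxProd (SimpleGraph.cycleGraph 4))
        (⟨0, by omega⟩, 0) (⟨n - 1, by omega⟩, 1)
      < resDist ((SimpleGraph.pathGraph n).boxProd (SimpleGraph.cycleGraph 4))
          (⟨0, by omega⟩, 0) (⟨n - 1, by omega⟩, 2) := by
  obtain ⟨m, rfl⟩ : ∃ m, n = m + 2 := ⟨n - 2, by omega⟩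
  have h1 := resDist_eq_of_potential
    ((SimpleGraph.pathGraph (m + 2)).boxProd (SimpleGraph.cycleGraph 4)) _ _ (Ypot m)
    (Ypot_spec m)
  have h2 := resDist_eq_of_potential
    ((SimpleGraph.pathGraph (m + 2)).boxProd (SimpleGraph.cycleGraph 4)) _ _ (Ypot' m)
    (Ypot'_spec m)
  have e1 : (⟨m + 2 - 1, by omega⟩ : Fin (m + 2)) = ⟨m + 1, by omega⟩ := rfl
  rw [e1, h1, h2]
  simp only [Ypot, Ypot', Gfun, Gfun', X2, X3, X4]
  simp
  linarith [final_ineq m]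
end
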